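/- arXiv:1205.3285 — 7 statements merged into one kernel-verified Lean document; each statement's English description precedes it below -/
import Mathlib

section
/- In the block setting, assume A₁A₂ ≠ 0 and that there are indices i, j such that the i-th column b₁ⁱ of B₁ and the j-th column b₂ʲ of B₂ satisfy (b₁ⁱ)ᵀĨb₂ʲ ≠ 0. Then the four columns b₁ⁱ, b₁ʲ, b₂ⁱ, b₂ʲ are linearly independent, rk B₁ ≥ 2, and, writing p for the number of +1 entries and q for the number of −1 entries on the diagonal of Ĩ, one has p ≥ rk B₁ and q ≥ rk B₁; in particular m ≥ 2·rk B₁ ≥ 4. -/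
open Matrix

noncomputable section

/-- Vectors of `ℝⁿ` (`n = 2k + m`) written as triples `(u, w, u*)`. -/
abbrev BV (k m : ℕ) := (Fin k → ℝ) × (Fin m → ℝ) × (Fin k → ℝ)

/-- The linear map `A : (u, w, u*) ↦ (-BᵀĨw + Cu*, Bu*, 0)` of the block setting,
where `Ĩ = diagonal ε`. -/
def Amap {k m : ℕ} (ε : Fin m → ℝ) (B : Matrix (Fin m) (Fin k) ℝ)
    (C : Matrix (Fin k) (Fin k) ℝ) (x : BV k m) : BV k m :=
  (-((Bᵀ * Matrix.diagonal ε) *ᵥ x.2.1) + C *ᵥ x.2.2, B *ᵥ x.2.2, 0)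

lemma dotdiag {m : ℕ} (ε : Fin m → ℝ) (x y : Fin m → ℝ) :
    x ⬝ᵥ (Matrix.diagonal ε *ᵥ y) = ∑ r, ε r * x r * y r := by
  simp only [dotProduct, Matrix.mulVec_diagonal]
  exact Finset.sum_congr rfl fun r _ => by ring

lemma gram_entry {m k : ℕ} (ε : Fin m → ℝ) (B B' : Matrix (Fin m) (Fin k) ℝ) (a b : Fin k) :
    (Bᵀ * Matrix.diagonal ε * B') a b = ∑ r, ε r * B r a * B' r b := by
  rw [Matrix.mul_assoc]
  simp only [Matrix.mul_apply, Matrix.transpose_apply, Matrix.diagonal_apply, ite_mul, zero_mul,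
    Finset.sum_ite_eq, Finset.mem_univ, if_true]
  exact Finset.sum_congr rfl fun r _ => by ring

lemma rank_le_card_sign {m k : ℕ} (ε : Fin m → ℝ) (hε : ∀ i, ε i = 1 ∨ ε i = -1)
    (B : Matrix (Fin m) (Fin k) ℝ) (hB : Bᵀ * Matrix.diagonal ε * B = 0)
    (e : ℝ) (he : e = 1 ∨ e = -1) :
    B.rank ≤ (Finset.univ.filter fun r : Fin m => ε r = e).card := by
  classical
  have hiso : ∀ x : Fin k → ℝ, ∑ r, ε r * (B *ᵥ x) r * (B *ᵥ x) r = 0 := by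
    intro x
    have : (B *ᵥ x) ⬝ᵥ (Matrix.diagonal ε *ᵥ (B *ᵥ x)) = 0 := by
      rw [Matrix.mulVec_mulVec, Matrix.dotProduct_mulVec, ← Matrix.vecMul_transpose,
        Matrix.vecMul_vecMul, ← Matrix.mul_assoc, hB]
      simp
    rwa [dotdiag] at this
  have hinj : ∀ v ∈ LinearMap.range B.mulVecLin, (∀ r : Fin m, ε r = e → v r = 0) → v = 0 := by
    rintro v ⟨x, rfl⟩ hv
    have h1 : ∀ r : Fin m, ε r * (B *ᵥ x) r * (B *ᵥ x) r = -e * ((B *ᵥ x) r * (B *ᵥ x) r) := by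
      intro r
      by_cases h : ε r = e
      · rw [show (B.mulVecLin x) = B *ᵥ x from rfl] at hv
        rw [hv r h]; ring
      · have : ε r = -e := by rcases hε r with h'|h' <;> rcases he with he'|he' <;>
          simp_all
        rw [this]; ring
    have h2 : -e * ∑ r, (B *ᵥ x) r * (B *ᵥ x) r = 0 := by
      rw [Finset.mul_sum, ← Finset.sum_congr rfl fun r _ => h1 r]
      exact hiso x
    have he0 : e ≠ 0 := by rcases he with h|h <;> rw [h] <;> norm_num
    have h3 : ∑ r, (B *ᵥ x) r * (B *ᵥ x) r = 0 := by
      rcases mul_eq_zero.mp h2 with h|h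
      · exact absurd (neg_eq_zero.mp h) he0
      · exact h
    show (B *ᵥ x) = 0
    funext r
    have := (Finset.sum_eq_zero_iff_of_nonneg
      (fun r _ => mul_self_nonneg _)).mp h3 r (Finset.mem_univ r)
    exact mul_self_eq_zero.mp this
  let L : (Fin m → ℝ) →ₗ[ℝ] ({r : Fin m // ε r = e} → ℝ) :=
    LinearMap.funLeft ℝ ℝ Subtype.val
  let f := L.comp (LinearMap.range B.mulVecLin).subtype
  have hfinj : Function.Injective f := by
    rw [← LinearMap.ker_eq_bot, Submodule.eq_bot_iff]
    rintro ⟨v, hv⟩ hker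
    rw [LinearMap.mem_ker] at hker
    have hz : ∀ r : Fin m, ε r = e → v r = 0 := fun r hr =>
      congrFun hker (⟨r, hr⟩ : {r : Fin m // ε r = e})
    exact Subtype.ext (hinj v hv hz)
  calc B.rank = Module.finrank ℝ ↥(LinearMap.range B.mulVecLin) := rfl
    _ ≤ Module.finrank ℝ ({r : Fin m // ε r = e} → ℝ) :=
        LinearMap.finrank_le_finrank_of_injective hfinj
    _ = Fintype.card {r : Fin m // ε r = e} := by rw [Module.finrank_pi]
    _ = (Finset.univ.filter fun r : Fin m => ε r = e).card := Fintype.card_subtype _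

lemma li_four {m k : ℕ} (ε : Fin m → ℝ)
    (B₁ B₂ : Matrix (Fin m) (Fin k) ℝ)
    (hB₁ : B₁ᵀ * Matrix.diagonal ε * B₁ = 0)
    (hB₂ : B₂ᵀ * Matrix.diagonal ε * B₂ = 0)
    (hskew : (B₁ᵀ * Matrix.diagonal ε * B₂)ᵀ = -(B₁ᵀ * Matrix.diagonal ε * B₂))
    (i j : Fin k) (hij : (B₁ᵀ i) ⬝ᵥ (Matrix.diagonal ε *ᵥ (B₂ᵀ j)) ≠ 0) :
    LinearIndependent ℝ ![B₁ᵀ i, B₁ᵀ j, B₂ᵀ i, B₂ᵀ j] := by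
  classical
  set c : ℝ := ∑ r, ε r * B₁ r i * B₂ r j with hc
  have hcne : c ≠ 0 := by rwa [dotdiag] at hij
  have hG1 : ∀ a b : Fin k, ∑ r, ε r * B₁ r a * B₁ r b = 0 := by
    intro a b; rw [← gram_entry, hB₁]; rfl
  have hG2 : ∀ a b : Fin k, ∑ r, ε r * B₂ r a * B₂ r b = 0 := by
    intro a b; rw [← gram_entry, hB₂]; rfl
  have hM : ∀ a b : Fin k, (∑ r, ε r * B₁ r b * B₂ r a) = -(∑ r, ε r * B₁ r a * B₂ r b) := by
    intro a b
    have := congrFun (congrFun hskew a) b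
    rw [Matrix.transpose_apply, Matrix.neg_apply, gram_entry, gram_entry] at this
    exact this
  have hflip : ∀ (x y : Fin m → ℝ), (∑ r, ε r * x r * y r) = ∑ r, ε r * y r * x r :=
    fun x y => Finset.sum_congr rfl fun r _ => by ring
  rw [Fintype.linearIndependent_iff]
  intro g hg
  have hs : ∀ r : Fin m, g 0 * B₁ r i + g 1 * B₁ r j + g 2 * B₂ r i + g 3 * B₂ r j = 0 := by
    intro r
    have := congrFun hg r
    simpa [Fin.sum_univ_four, Matrix.transpose_apply] using this
  have key : ∀ t : Fin m → ℝ,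
      g 0 * (∑ r, ε r * B₁ r i * t r) + g 1 * (∑ r, ε r * B₁ r j * t r) +
      g 2 * (∑ r, ε r * B₂ r i * t r) + g 3 * (∑ r, ε r * B₂ r j * t r) = 0 := by
    intro t
    calc g 0 * (∑ r, ε r * B₁ r i * t r) + g 1 * (∑ r, ε r * B₁ r j * t r) +
        g 2 * (∑ r, ε r * B₂ r i * t r) + g 3 * (∑ r, ε r * B₂ r j * t r)
        = ∑ r, ε r * (g 0 * B₁ r i + g 1 * B₁ r j + g 2 * B₂ r i + g 3 * B₂ r j) * t r := by
          rw [Finset.mul_sum, Finset.mul_sum, Finset.mul_sum, Finset.mul_sum,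
            ← Finset.sum_add_distrib, ← Finset.sum_add_distrib, ← Finset.sum_add_distrib]
          exact Finset.sum_congr rfl fun r _ => by ring
      _ = 0 := Finset.sum_eq_zero fun r _ => by rw [hs r]; ring
  have hMii : (∑ r, ε r * B₁ r i * B₂ r i) = 0 := by have := hM i i; linarith
  have hMjj : (∑ r, ε r * B₁ r j * B₂ r j) = 0 := by have := hM j j; linarith
  have hMji : (∑ r, ε r * B₁ r j * B₂ r i) = -c := by have := hM i j; rw [← hc] at this; linarith
  have k1 := key (fun r => B₂ r j)
  rw [← hc, hMjj, hflip (fun r => B₂ r i) (fun r => B₂ r j)] at k1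
  rw [hG2 j j] at k1
  have hg0 : g 0 = 0 := by
    have : g 0 * c = 0 := by
      have h' : (∑ r, ε r * B₂ r j * B₂ r i) = 0 := hG2 j i
      rw [h'] at k1; linarith
    exact (mul_eq_zero.mp this).resolve_right hcne
  have k2 := key (fun r => B₂ r i)
  rw [hMii, hMji, hG2 i i, hflip (fun r => B₂ r j) (fun r => B₂ r i), hG2 i j] at k2
  have hg1 : g 1 = 0 := by
    have : g 1 * (-c) = 0 := by rw [hg0] at k2; linarith
    exact (mul_eq_zero.mp this).resolve_right (neg_ne_zero.mpr hcne)
  have k3 := key (fun r => B₁ r j)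
  rw [hG1 i j, hG1 j j, hflip (fun r => B₂ r i) (fun r => B₁ r j),
    hflip (fun r => B₂ r j) (fun r => B₁ r j)] at k3
  rw [hMji, hMjj] at k3
  have hg2 : g 2 = 0 := by
    have : g 2 * (-c) = 0 := by rw [hg0, hg1] at k3; linarith
    exact (mul_eq_zero.mp this).resolve_right (neg_ne_zero.mpr hcne)
  have k4 := key (fun r => B₁ r i)
  rw [hG1 i i, hG1 j i, hflip (fun r => B₂ r i) (fun r => B₁ r i),
    hflip (fun r => B₂ r j) (fun r => B₁ r i)] at k4
  rw [hMii, ← hc] at k4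
  have hg3 : g 3 = 0 := by
    have : g 3 * c = 0 := by rw [hg0, hg1, hg2] at k4; linarith
    exact (mul_eq_zero.mp this).resolve_right hcne
  intro l
  fin_cases l <;> assumption

/-- if `A₁A₂ ≠ 0` and columns `b₁ⁱ`, `b₂ʲ` satisfy
`(b₁ⁱ)ᵀĨb₂ʲ ≠ 0`, then `b₁ⁱ, b₁ʲ, b₂ⁱ, b₂ʲ` are linearly independent,
`rk B₁ ≥ 2`, the numbers `p`, `q` of `+1`'s and `-1`'s of `Ĩ` satisfy
`p, q ≥ rk B₁`, and `m ≥ 2 rk B₁ ≥ 4`. -/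
theorem witt_index_bound (k m : ℕ) (hk : 1 ≤ k) (hm : 1 ≤ m)
    (ε : Fin m → ℝ) (hε : ∀ i, ε i = 1 ∨ ε i = -1)
    (B₁ B₂ : Matrix (Fin m) (Fin k) ℝ)
    (hB₁ : B₁ᵀ * Matrix.diagonal ε * B₁ = 0)
    (hB₂ : B₂ᵀ * Matrix.diagonal ε * B₂ = 0)
    (C₁ C₂ : Matrix (Fin k) (Fin k) ℝ) (hC₁ : C₁ᵀ = -C₁) (hC₂ : C₂ᵀ = -C₂)
    (u₁ u₂ u₁s u₂s u₃ : Fin k → ℝ) (w₁ w₂ : Fin m → ℝ) (v₁ v₂ v₃ : BV k m)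
    (hv₁ : v₁ = (u₁, w₁, u₁s)) (hv₂ : v₂ = (u₂, w₂, u₂s)) (hv₃ : v₃ = (u₃, 0, 0))
    (hA₁v₁ : Amap ε B₁ C₁ v₁ = 0) (hA₂v₂ : Amap ε B₂ C₂ v₂ = 0)
    (hskew : (B₁ᵀ * Matrix.diagonal ε * B₂)ᵀ = -(B₁ᵀ * Matrix.diagonal ε * B₂))
    (h12 : (2 : ℝ) • Amap ε B₁ C₁ v₂ = v₃)
    (h21 : (-2 : ℝ) • Amap ε B₂ C₂ v₁ = v₃)
    (hA₁A₂ : (fun x => Amap ε B₁ C₁ (Amap ε B₂ C₂ x)) ≠ fun _ : BV k m => (0 : BV k m))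
    (i j : Fin k) (hij : (B₁ᵀ i) ⬝ᵥ (Matrix.diagonal ε *ᵥ (B₂ᵀ j)) ≠ 0) :
    LinearIndependent ℝ ![B₁ᵀ i, B₁ᵀ j, B₂ᵀ i, B₂ᵀ j] ∧
    2 ≤ B₁.rank ∧
    B₁.rank ≤ (Finset.univ.filter fun r : Fin m => ε r = 1).card ∧
    B₁.rank ≤ (Finset.univ.filter fun r : Fin m => ε r = -1).card ∧
    2 * B₁.rank ≤ m ∧ 4 ≤ 2 * B₁.rank := by
  classical
  have hli := li_four ε B₁ B₂ hB₁ hB₂ hskew i j hij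
  -- two columns of B₁ are linearly independent
  have hli2 : LinearIndependent ℝ ![B₁ᵀ i, B₁ᵀ j] := by
    have hfinj : Function.Injective (![0, 1] : Fin 2 → Fin 4) := by decide
    have := hli.comp (![0, 1] : Fin 2 → Fin 4) hfinj
    have heq : (![B₁ᵀ i, B₁ᵀ j, B₂ᵀ i, B₂ᵀ j] ∘ (![0, 1] : Fin 2 → Fin 4))
        = ![B₁ᵀ i, B₁ᵀ j] := by
      funext l; fin_cases l <;> rfl
    rwa [heq] at this
  have hrank2 : 2 ≤ B₁.rank := by
    rw [Matrix.rank_eq_finrank_span_cols]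
    have h2 : Module.finrank ℝ (Submodule.span ℝ (Set.range ![B₁ᵀ i, B₁ᵀ j])) = 2 := by
      rw [finrank_span_eq_card hli2]; simp
    rw [← h2]
    apply Submodule.finrank_mono
    apply Submodule.span_mono
    rintro x ⟨l, rfl⟩
    fin_cases l
    · exact ⟨i, rfl⟩
    · exact ⟨j, rfl⟩
  have hp := rank_le_card_sign ε hε B₁ hB₁ 1 (Or.inl rfl)
  have hq := rank_le_card_sign ε hε B₁ hB₁ (-1) (Or.inr rfl)
  have hpq : (Finset.univ.filter fun r : Fin m => ε r = 1).card +
      (Finset.univ.filter fun r : Fin m => ε r = -1).card ≤ m := by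
    have hdisj : Disjoint (Finset.univ.filter fun r : Fin m => ε r = 1)
        (Finset.univ.filter fun r : Fin m => ε r = -1) := by
      rw [Finset.disjoint_left]
      intro r h1 h2
      simp only [Finset.mem_filter] at h1 h2
      have := h1.2; have := h2.2; linarith
    calc (Finset.univ.filter fun r : Fin m => ε r = 1).card +
        (Finset.univ.filter fun r : Fin m => ε r = -1).card
        = ((Finset.univ.filter fun r : Fin m => ε r = 1) ∪
          (Finset.univ.filter fun r : Fin m => ε r = -1)).card :=
          (Finset.card_union_of_disjoint hdisj).symm
      _ ≤ (Finset.univ : Finset (Fin m)).card := Finset.card_le_univ _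
      _ = m := Finset.card_fin m
  refine ⟨hli, hrank2, hp, hq, ?_, by omega⟩
  omega

end
end

section
/- In the block setting, if u₃ lies in the column space of the matrix B₁ᵀĨB₂, then the affine map γ₃ : x ↦ x + 2A₁A₂x + v₃ has a fixed point in ℝⁿ. -/
open Matrix

noncomputable section

/-- if `u₃` lies in the column space of `B₁ᵀĨB₂`, then
`γ₃ : x ↦ x + 2A₁A₂x + v₃` has a fixed point. -/
theorem fixed_point_of_u3_in_image (k m : ℕ) (hk : 1 ≤ k) (hm : 1 ≤ m)
    (ε : Fin m → ℝ) (hε : ∀ i, ε i = 1 ∨ ε i = -1)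
    (B₁ B₂ : Matrix (Fin m) (Fin k) ℝ)
    (hB₁ : B₁ᵀ * Matrix.diagonal ε * B₁ = 0)
    (hB₂ : B₂ᵀ * Matrix.diagonal ε * B₂ = 0)
    (C₁ C₂ : Matrix (Fin k) (Fin k) ℝ) (hC₁ : C₁ᵀ = -C₁) (hC₂ : C₂ᵀ = -C₂)
    (u₁ u₂ u₁s u₂s u₃ : Fin k → ℝ) (w₁ w₂ : Fin m → ℝ) (v₁ v₂ v₃ : BV k m)
    (hv₁ : v₁ = (u₁, w₁, u₁s)) (hv₂ : v₂ = (u₂, w₂, u₂s)) (hv₃ : v₃ = (u₃, 0, 0))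
    (hA₁v₁ : Amap ε B₁ C₁ v₁ = 0) (hA₂v₂ : Amap ε B₂ C₂ v₂ = 0)
    (hskew : (B₁ᵀ * Matrix.diagonal ε * B₂)ᵀ = -(B₁ᵀ * Matrix.diagonal ε * B₂))
    (h12 : (2 : ℝ) • Amap ε B₁ C₁ v₂ = v₃)
    (h21 : (-2 : ℝ) • Amap ε B₂ C₂ v₁ = v₃)
    (hu₃ : ∃ z : Fin k → ℝ, (B₁ᵀ * Matrix.diagonal ε * B₂) *ᵥ z = u₃) :
    ∃ x : BV k m, x + (2 : ℝ) • Amap ε B₁ C₁ (Amap ε B₂ C₂ x) + v₃ = x := by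
  obtain ⟨z, hz⟩ := hu₃
  refine ⟨(0, 0, (2:ℝ)⁻¹ • z), ?_⟩
  simp only [Amap, hv₃]
  ext i <;>
    simp [Matrix.mulVec_smul, ← Matrix.mulVec_mulVec, ← hz, Matrix.mul_assoc,
      Pi.add_apply, Pi.smul_apply, smul_eq_mul] <;> ring

end
end

section
/- In the block setting, assume rk(B₁ᵀĨB₂) = rk B₁ = rk B₂. If the affine map γ₃ has no fixed point in ℝⁿ, then the u*-components of the translation parts satisfy u₁* ≠ 0 and u₂* ≠ 0. -/
open Matrix

noncomputable section

/-- if `rk(B₁ᵀĨB₂) = rk B₁ = rk B₂` and `γ₃` has no fixed point,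
then `u₁* ≠ 0` and `u₂* ≠ 0`. -/
theorem ustar_nonzero (k m : ℕ) (hk : 1 ≤ k) (hm : 1 ≤ m)
    (ε : Fin m → ℝ) (hε : ∀ i, ε i = 1 ∨ ε i = -1)
    (B₁ B₂ : Matrix (Fin m) (Fin k) ℝ)
    (hB₁ : B₁ᵀ * Matrix.diagonal ε * B₁ = 0)
    (hB₂ : B₂ᵀ * Matrix.diagonal ε * B₂ = 0)
    (C₁ C₂ : Matrix (Fin k) (Fin k) ℝ) (hC₁ : C₁ᵀ = -C₁) (hC₂ : C₂ᵀ = -C₂)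
    (u₁ u₂ u₁s u₂s u₃ : Fin k → ℝ) (w₁ w₂ : Fin m → ℝ) (v₁ v₂ v₃ : BV k m)
    (hv₁ : v₁ = (u₁, w₁, u₁s)) (hv₂ : v₂ = (u₂, w₂, u₂s)) (hv₃ : v₃ = (u₃, 0, 0))
    (hA₁v₁ : Amap ε B₁ C₁ v₁ = 0) (hA₂v₂ : Amap ε B₂ C₂ v₂ = 0)
    (hskew : (B₁ᵀ * Matrix.diagonal ε * B₂)ᵀ = -(B₁ᵀ * Matrix.diagonal ε * B₂))
    (h12 : (2 : ℝ) • Amap ε B₁ C₁ v₂ = v₃)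
    (h21 : (-2 : ℝ) • Amap ε B₂ C₂ v₁ = v₃)
    (hrk₁ : (B₁ᵀ * Matrix.diagonal ε * B₂).rank = B₁.rank)
    (hrk₂ : B₁.rank = B₂.rank)
    (hfree : ¬ ∃ x : BV k m, x + (2 : ℝ) • Amap ε B₁ C₁ (Amap ε B₂ C₂ x) + v₃ = x) :
    u₁s ≠ 0 ∧ u₂s ≠ 0 := by
  set D := Matrix.diagonal ε with hD
  set M := B₁ᵀ * D * B₂ with hM
  -- D is invertible
  have hDdet : IsUnit D.det := by
    rw [hD, Matrix.det_diagonal]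
    refine isUnit_iff_ne_zero.mpr (Finset.prod_ne_zero_iff.mpr fun i _ => ?_)
    rcases hε i with h | h <;> rw [h] <;> norm_num
  -- auxiliary: if rank (A*B) = rank A then ranges agree
  have key : ∀ (A : Matrix (Fin k) (Fin m) ℝ) (B : Matrix (Fin m) (Fin k) ℝ),
      (A * B).rank = A.rank →
      LinearMap.range (A * B).mulVecLin = LinearMap.range A.mulVecLin := by
    intro A B h
    refine Submodule.eq_of_le_of_finrank_eq ?_ h
    rw [Matrix.mulVecLin_mul]
    exact LinearMap.range_comp_le_range _ _
  have hrkB₁D : (B₁ᵀ * D).rank = B₁.rank := by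
    rw [Matrix.rank_mul_eq_left_of_isUnit_det _ _ hDdet, Matrix.rank_transpose]
  have hrkB₂D : (B₂ᵀ * D).rank = B₂.rank := by
    rw [Matrix.rank_mul_eq_left_of_isUnit_det _ _ hDdet, Matrix.rank_transpose]
  -- range M = range (B₁ᵀ * D)
  have hR1 : LinearMap.range M.mulVecLin = LinearMap.range (B₁ᵀ * D).mulVecLin := by
    have := key (B₁ᵀ * D) B₂ (by rw [← hM, hrk₁, hrkB₁D])
    rwa [← hM] at this
  -- Mᵀ = B₂ᵀ * D * B₁
  have hMT : Mᵀ = B₂ᵀ * D * B₁ := by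
    rw [hM, Matrix.transpose_mul, Matrix.transpose_mul, Matrix.transpose_transpose,
      Matrix.diagonal_transpose, Matrix.mul_assoc]
  -- range M = range (B₂ᵀ * D)
  have hR2 : LinearMap.range M.mulVecLin = LinearMap.range (B₂ᵀ * D).mulVecLin := by
    have hrkMT : (B₂ᵀ * D * B₁).rank = B₂.rank := by
      rw [← hMT, Matrix.rank_transpose, hM, hrk₁, hrk₂]
    have := key (B₂ᵀ * D) B₁ (by rw [hrkMT, hrkB₂D])
    rw [← hMT, hskew] at this
    rw [← this]
    have : (-M).mulVecLin = -(M.mulVecLin) := by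
      apply LinearMap.ext; intro x
      simp [Matrix.neg_mulVec]
    rw [this, LinearMap.range_neg]
  -- if u₃ is in the range of M, there is a fixed point
  have main : u₃ ∉ LinearMap.range M.mulVecLin := by
    rintro ⟨ξ, hξ⟩
    apply hfree
    refine ⟨(0, 0, (1/2 : ℝ) • ξ), ?_⟩
    have h1 : (B₁ᵀ * Matrix.diagonal ε) *ᵥ (B₂ *ᵥ ((1/2 : ℝ) • ξ)) = (1/2 : ℝ) • u₃ := by
      rw [Matrix.mulVec_mulVec, ← hD, ← hM, Matrix.mulVec_smul, ← Matrix.mulVecLin_apply, hξ]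
    simp only [Amap, hv₃, Matrix.mulVec_zero, add_zero, h1]
    ext i <;> simp <;> try ring
  -- extract the first components of h12 and h21
  constructor
  · rintro rfl
    apply main
    rw [hR2]
    have := congrArg Prod.fst h21
    simp only [Amap, hv₁, hv₃, Prod.smul_def, Matrix.mulVec_zero, add_zero] at this
    rw [← hD] at this
    refine ⟨(2 : ℝ) • w₁, ?_⟩
    rw [Matrix.mulVecLin_apply, Matrix.mulVec_smul, ← this]
    ext i
    simp
    try ring
  · rintro rfl
    apply main
    rw [hR1]
    have := congrArg Prod.fst h12
    simp only [Amap, hv₂, hv₃, Prod.smul_def, Matrix.mulVec_zero, add_zero] at this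
    rw [← hD] at this
    refine ⟨(-2 : ℝ) • w₂, ?_⟩
    rw [Matrix.mulVecLin_apply, Matrix.mulVec_smul, ← this]
    ext i
    simp
    try ring

end
end

section
/- In the block setting, if k = 2 and B₁ᵀĨB₂ ≠ 0 (i.e. A₁A₂ ≠ 0), then the affine map γ₃ has a fixed point in ℝⁿ; in particular, the group generated by the affine isometries γ₁ and γ₂ does not act freely on ℝⁿ. -/
open Matrix

noncomputable section

/-- if `k = 2` and `B₁ᵀĨB₂ ≠ 0` (i.e. `A₁A₂ ≠ 0`), then `γ₃` has a
fixed point; in particular `γ₃` is a non-identity element of the group generated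
by `γ₁, γ₂` having a fixed point, so this group does not act freely on `ℝⁿ`. -/
theorem not_free_of_k_eq_two (k m : ℕ) (hk : k = 2) (hm : 1 ≤ m)
    (ε : Fin m → ℝ) (hε : ∀ i, ε i = 1 ∨ ε i = -1)
    (B₁ B₂ : Matrix (Fin m) (Fin k) ℝ)
    (hB₁ : B₁ᵀ * Matrix.diagonal ε * B₁ = 0)
    (hB₂ : B₂ᵀ * Matrix.diagonal ε * B₂ = 0)
    (C₁ C₂ : Matrix (Fin k) (Fin k) ℝ) (hC₁ : C₁ᵀ = -C₁) (hC₂ : C₂ᵀ = -C₂)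
    (u₁ u₂ u₁s u₂s u₃ : Fin k → ℝ) (w₁ w₂ : Fin m → ℝ) (v₁ v₂ v₃ : BV k m)
    (hv₁ : v₁ = (u₁, w₁, u₁s)) (hv₂ : v₂ = (u₂, w₂, u₂s)) (hv₃ : v₃ = (u₃, 0, 0))
    (hA₁v₁ : Amap ε B₁ C₁ v₁ = 0) (hA₂v₂ : Amap ε B₂ C₂ v₂ = 0)
    (hskew : (B₁ᵀ * Matrix.diagonal ε * B₂)ᵀ = -(B₁ᵀ * Matrix.diagonal ε * B₂))
    (h12 : (2 : ℝ) • Amap ε B₁ C₁ v₂ = v₃)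
    (h21 : (-2 : ℝ) • Amap ε B₂ C₂ v₁ = v₃)
    (hA₁A₂ : B₁ᵀ * Matrix.diagonal ε * B₂ ≠ 0) :
    (∃ x : BV k m, x + (2 : ℝ) • Amap ε B₁ C₁ (Amap ε B₂ C₂ x) + v₃ = x) ∧
    (fun x : BV k m => x + (2 : ℝ) • Amap ε B₁ C₁ (Amap ε B₂ C₂ x) + v₃) ≠ id := by
  subst hk hv₃
  set D := B₁ᵀ * Matrix.diagonal ε * B₂ with hD
  -- skew-symmetry facts
  have h00 : D 0 0 = 0 := by
    have := congrFun (congrFun hskew 0) 0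
    simp [Matrix.transpose_apply] at this; linarith
  have h11 : D 1 1 = 0 := by
    have := congrFun (congrFun hskew 1) 1
    simp [Matrix.transpose_apply] at this; linarith
  have h10 : D 1 0 = -(D 0 1) := by
    have := congrFun (congrFun hskew 0) 1
    simp [Matrix.transpose_apply] at this; linarith
  have h01 : D 0 1 ≠ 0 := by
    intro h
    apply hA₁A₂
    ext i j
    fin_cases i <;> fin_cases j <;>
      simp_all [h00, h11, h10, h]
  have hdet : D.det ≠ 0 := by
    rw [Matrix.det_fin_two, h00, h11, h10]
    intro h; apply h01; nlinarith
  have hinv : D * D⁻¹ = 1 := Matrix.mul_nonsing_inv D (isUnit_iff_ne_zero.mpr hdet)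
  have hsolve : ∀ y : Fin 2 → ℝ, D *ᵥ (D⁻¹ *ᵥ y) = y := by
    intro y
    rw [Matrix.mulVec_mulVec, hinv, Matrix.one_mulVec]
  have key : ∀ us : Fin 2 → ℝ,
      Amap ε B₁ C₁ (Amap ε B₂ C₂ ((0, 0, us) : BV 2 m)) = (-(D *ᵥ us), 0, 0) := by
    intro us
    simp [Amap, Matrix.mulVec_zero, Matrix.mulVec_mulVec, hD, Matrix.mul_assoc]
  constructor
  · refine ⟨(0, 0, D⁻¹ *ᵥ ((1/2 : ℝ) • u₃)), ?_⟩
    rw [key]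
    rw [hsolve]
    refine Prod.ext ?_ (Prod.ext ?_ ?_) <;> funext i <;>
      simp [Prod.fst, Prod.snd] <;> ring
  · intro h
    have h0 := congrFun h (0 : BV 2 m)
    simp [Amap, Matrix.mulVec_zero] at h0
    -- h0 should give u₃ = 0
    have hu₃ : u₃ = 0 := h0
    have h1 := congrFun h ((0, 0, D⁻¹ *ᵥ (fun _ => 1)) : BV 2 m)
    rw [key, hsolve] at h1
    have := congrArg Prod.fst h1
    simp [hu₃] at this
    have := congrFun this 0
    norm_num at this

end
end

section
/- In the block setting, if k = 3, B₁ᵀĨB₂ ≠ 0 (i.e. A₁A₂ ≠ 0), and the sum of the column spaces of B₁ and B₂ has dimension at most 5, then the affine map γ₃ has a fixed point in ℝⁿ. -/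
open Matrix

noncomputable section

lemma skew3_ker (S : Matrix (Fin 3) (Fin 3) ℝ) (hS : Sᵀ = -S)
    (hz : ![S 1 2, -(S 0 2), S 0 1] ≠ 0) (p : Fin 3 → ℝ) (hp : S *ᵥ p = 0) :
    ∃ μ : ℝ, p = μ • ![S 1 2, -(S 0 2), S 0 1] := by
  have e : ∀ i j, S j i = - S i j := fun i j => by
    have := congrFun (congrFun hS i) j; simpa [Matrix.transpose_apply] using this
  have h00 : S 0 0 = 0 := by have := e 0 0; linarith
  have h11 : S 1 1 = 0 := by have := e 1 1; linarith
  have h22 : S 2 2 = 0 := by have := e 2 2; linarith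
  have h10 : S 1 0 = -(S 0 1) := e 0 1
  have h20 : S 2 0 = -(S 0 2) := e 0 2
  have h21 : S 2 1 = -(S 1 2) := e 1 2
  have hp0 := congrFun hp 0
  have hp1 := congrFun hp 1
  have hp2 := congrFun hp 2
  simp [Matrix.mulVec, dotProduct, Fin.sum_univ_three, h00, h11, h22, h10, h20, h21] at hp0 hp1 hp2
  have hnz : (S 0 1)^2 + (S 0 2)^2 + (S 1 2)^2 ≠ 0 := by
    intro h
    have ha0 : S 0 1 = 0 := by nlinarith [sq_nonneg (S 0 1), sq_nonneg (S 0 2), sq_nonneg (S 1 2)]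
    have hb0 : S 0 2 = 0 := by nlinarith [sq_nonneg (S 0 1), sq_nonneg (S 0 2), sq_nonneg (S 1 2)]
    have hc0 : S 1 2 = 0 := by nlinarith [sq_nonneg (S 0 1), sq_nonneg (S 0 2), sq_nonneg (S 1 2)]
    apply hz
    ext i; fin_cases i <;> simp [ha0, hb0, hc0]
  refine ⟨(p 0 * S 1 2 - p 1 * S 0 2 + p 2 * S 0 1) / ((S 0 1)^2+(S 0 2)^2+(S 1 2)^2), ?_⟩
  ext i; fin_cases i <;>
    simp only [Matrix.cons_val_zero, Matrix.cons_val_one, Matrix.head_cons, Pi.smul_apply,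
      smul_eq_mul, Fin.isValue, Matrix.cons_val_two, Matrix.tail_cons] <;>
    simp only [show ((⟨0, by norm_num⟩ : Fin 3)) = 0 from rfl, show ((⟨1, by norm_num⟩ : Fin 3)) = 1 from rfl,
      show ((⟨2, by norm_num⟩ : Fin 3)) = 2 from rfl, Matrix.cons_val_zero, Matrix.cons_val_one,
      Matrix.head_cons, Matrix.cons_val_two, Matrix.tail_cons] <;> field_simp
  · linear_combination (-(S 0 1)) * hp1 + (-(S 0 2)) * hp2
  · linear_combination (S 0 1) * hp0 + (-(S 1 2)) * hp2
  · linear_combination (S 0 2) * hp0 + (S 1 2) * hp1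

lemma skew3_range (S : Matrix (Fin 3) (Fin 3) ℝ) (hS : Sᵀ = -S)
    (hz : ![S 1 2, -(S 0 2), S 0 1] ≠ 0) (u : Fin 3 → ℝ)
    (hu : u ⬝ᵥ ![S 1 2, -(S 0 2), S 0 1] = 0) :
    ∃ t : Fin 3 → ℝ, S *ᵥ t = u := by
  have e : ∀ i j, S j i = - S i j := fun i j => by
    have := congrFun (congrFun hS i) j; simpa [Matrix.transpose_apply] using this
  have h00 : S 0 0 = 0 := by have := e 0 0; linarith
  have h11 : S 1 1 = 0 := by have := e 1 1; linarith
  have h22 : S 2 2 = 0 := by have := e 2 2; linarith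
  have h10 : S 1 0 = -(S 0 1) := e 0 1
  have h20 : S 2 0 = -(S 0 2) := e 0 2
  have h21 : S 2 1 = -(S 1 2) := e 1 2
  have hnz : (S 0 1)^2 + (S 0 2)^2 + (S 1 2)^2 ≠ 0 := by
    intro h
    have ha0 : S 0 1 = 0 := by nlinarith [sq_nonneg (S 0 1), sq_nonneg (S 0 2), sq_nonneg (S 1 2)]
    have hb0 : S 0 2 = 0 := by nlinarith [sq_nonneg (S 0 1), sq_nonneg (S 0 2), sq_nonneg (S 1 2)]
    have hc0 : S 1 2 = 0 := by nlinarith [sq_nonneg (S 0 1), sq_nonneg (S 0 2), sq_nonneg (S 1 2)]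
    apply hz
    ext i; fin_cases i <;> simp [ha0, hb0, hc0]
  simp [dotProduct, Fin.sum_univ_three] at hu
  have key : S *ᵥ ![ -(S 0 2) * u 2 - (S 0 1) * u 1,
                      (S 0 1) * u 0 - (S 1 2) * u 2,
                      (S 1 2) * u 1 + (S 0 2) * u 0 ]
      = ((S 0 1)^2+(S 0 2)^2+(S 1 2)^2) • u := by
    ext i
    fin_cases i <;>
      simp only [Matrix.mulVec, dotProduct, Fin.sum_univ_three, Matrix.cons_val_zero,
        Matrix.cons_val_one, Matrix.head_cons, Matrix.cons_val_two, Matrix.tail_cons, Fin.isValue,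
        Pi.smul_apply, smul_eq_mul,
        show ((⟨0, by norm_num⟩ : Fin 3)) = 0 from rfl, show ((⟨1, by norm_num⟩ : Fin 3)) = 1 from rfl,
        show ((⟨2, by norm_num⟩ : Fin 3)) = 2 from rfl, h00, h11, h22, h10, h20, h21]
    · linear_combination (-(S 1 2)) * hu
    · linear_combination (S 0 2) * hu
    · linear_combination (-(S 0 1)) * hu
  refine ⟨((S 0 1)^2+(S 0 2)^2+(S 1 2)^2)⁻¹ • ![ -(S 0 2) * u 2 - (S 0 1) * u 1,
                      (S 0 1) * u 0 - (S 1 2) * u 2,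
                      (S 1 2) * u 1 + (S 0 2) * u 0 ], ?_⟩
  rw [Matrix.mulVec_smul, key, smul_smul, inv_mul_cancel₀ hnz, one_smul]

lemma z_ne_zero (S : Matrix (Fin 3) (Fin 3) ℝ) (hS : Sᵀ = -S) (hSne : S ≠ 0) :
    ![S 1 2, -(S 0 2), S 0 1] ≠ 0 := by
  intro h
  apply hSne
  have e : ∀ i j, S j i = - S i j := fun i j => by
    have := congrFun (congrFun hS i) j; simpa [Matrix.transpose_apply] using this
  have h0 := congrFun h 0
  have h1 := congrFun h 1
  have h2 := congrFun h 2
  simp at h0 h1 h2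
  ext i j
  fin_cases i <;> fin_cases j <;>
    simp only [Matrix.zero_apply, show ((⟨0, by norm_num⟩ : Fin 3)) = 0 from rfl,
      show ((⟨1, by norm_num⟩ : Fin 3)) = 1 from rfl,
      show ((⟨2, by norm_num⟩ : Fin 3)) = 2 from rfl] <;>
    linarith [e 0 0, e 1 1, e 2 2, e 0 1, e 0 2, e 1 2, h0, h1, h2]

lemma tdd {m k : ℕ} (ε : Fin m → ℝ) (B : Matrix (Fin m) (Fin k) ℝ)
    (w : Fin m → ℝ) (v : Fin k → ℝ) :
    ((Bᵀ * Matrix.diagonal ε) *ᵥ w) ⬝ᵥ v = w ⬝ᵥ (Matrix.diagonal ε *ᵥ (B *ᵥ v)) := by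
  have h : Bᵀ * Matrix.diagonal ε = (Matrix.diagonal ε * B)ᵀ := by
    rw [Matrix.transpose_mul, Matrix.diagonal_transpose]
  rw [h, Matrix.mulVec_transpose, ← Matrix.dotProduct_mulVec, ← Matrix.mulVec_mulVec]

lemma skewquad {k : ℕ} (C : Matrix (Fin k) (Fin k) ℝ) (hC : Cᵀ = -C) (v : Fin k → ℝ) :
    (C *ᵥ v) ⬝ᵥ v = 0 := by
  have h1 : (C *ᵥ v) ⬝ᵥ v = v ⬝ᵥ (C *ᵥ v) := dotProduct_comm _ _
  have h2 : (Cᵀ *ᵥ v) ⬝ᵥ v = v ⬝ᵥ (C *ᵥ v) := by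
    rw [Matrix.mulVec_transpose, ← Matrix.dotProduct_mulVec]
  rw [hC, Matrix.neg_mulVec, neg_dotProduct] at h2
  linarith [h1, h2]

lemma indep_aux (m : ℕ) (ε : Fin m → ℝ) (B₁ B₂ : Matrix (Fin m) (Fin 3) ℝ)
    (hB₁ : B₁ᵀ * Matrix.diagonal ε * B₁ = 0)
    (hB₂ : B₂ᵀ * Matrix.diagonal ε * B₂ = 0)
    (hskew : (B₁ᵀ * Matrix.diagonal ε * B₂)ᵀ = -(B₁ᵀ * Matrix.diagonal ε * B₂))
    (z : Fin 3 → ℝ)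
    (hker : ∀ p, (B₁ᵀ * Matrix.diagonal ε * B₂) *ᵥ p = 0 → ∃ μ : ℝ, p = μ • z)
    (hB₂z : B₂ *ᵥ z ≠ 0)
    (hnodep : ∀ μ : ℝ, B₁ *ᵥ z ≠ μ • (B₂ *ᵥ z))
    (i j k : Fin 3) (hji : j ≠ i) (hki : k ≠ i) (hjk : j ≠ k) (hzi : z i ≠ 0)
    (hdim : Module.finrank ℝ
      ↥(LinearMap.range B₁.mulVecLin ⊔ LinearMap.range B₂.mulVecLin) ≤ 5) :
    False := by
  set S := B₁ᵀ * Matrix.diagonal ε * B₂ with hS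
  set D := Matrix.diagonal ε with hD
  set W := LinearMap.range B₁.mulVecLin ⊔ LinearMap.range B₂.mulVecLin with hW
  set x : Fin 3 → ℝ := Pi.single j 1 with hx
  set y : Fin 3 → ℝ := Pi.single k 1 with hy
  have mem1 : ∀ v, B₁ *ᵥ v ∈ W := fun v => Submodule.mem_sup_left ⟨v, rfl⟩
  have mem2 : ∀ v, B₂ *ᵥ v ∈ W := fun v => Submodule.mem_sup_right ⟨v, rfl⟩
  set f : Fin 6 → ↥W := ![⟨B₁ *ᵥ x, mem1 x⟩, ⟨B₁ *ᵥ y, mem1 y⟩, ⟨B₁ *ᵥ z, mem1 z⟩,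
    ⟨B₂ *ᵥ x, mem2 x⟩, ⟨B₂ *ᵥ y, mem2 y⟩, ⟨B₂ *ᵥ z, mem2 z⟩] with hf
  have hB₂DB₁ : B₂ᵀ * D * B₁ = -S := by
    rw [← hskew, hS, Matrix.transpose_mul, Matrix.transpose_mul, Matrix.transpose_transpose,
      Matrix.diagonal_transpose, Matrix.mul_assoc]
  have hindep : LinearIndependent ℝ f := by
    rw [Fintype.linearIndependent_iff]
    intro g hg
    have hg' : g 0 • (B₁ *ᵥ x) + g 1 • (B₁ *ᵥ y) + g 2 • (B₁ *ᵥ z) + g 3 • (B₂ *ᵥ x)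
        + g 4 • (B₂ *ᵥ y) + g 5 • (B₂ *ᵥ z) = 0 := by
      have := congrArg (fun s : ↥W => (s : Fin m → ℝ)) hg
      simpa [Fin.sum_univ_six, hf] using this
    set p : Fin 3 → ℝ := g 0 • x + g 1 • y + g 2 • z with hp
    set q : Fin 3 → ℝ := g 3 • x + g 4 • y + g 5 • z with hq
    have hsum : B₁ *ᵥ p + B₂ *ᵥ q = 0 := by
      rw [hp, hq]
      simp only [Matrix.mulVec_add, Matrix.mulVec_smul]
      rw [← hg']; abel
    have hSp : S *ᵥ p = 0 := by
      have h2 := congrArg (fun v => (B₂ᵀ * D) *ᵥ v) hsum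
      simp only [Matrix.mulVec_add, Matrix.mulVec_mulVec, Matrix.mulVec_zero] at h2
      rw [hB₂DB₁, hB₂, Matrix.zero_mulVec, add_zero, Matrix.neg_mulVec, neg_eq_zero] at h2
      exact h2
    have hSq : S *ᵥ q = 0 := by
      have h2 := congrArg (fun v => (B₁ᵀ * D) *ᵥ v) hsum
      simp only [Matrix.mulVec_add, Matrix.mulVec_mulVec, Matrix.mulVec_zero] at h2
      rw [hB₁, Matrix.zero_mulVec, zero_add, ← hS] at h2
      exact h2
    obtain ⟨μ, hμ⟩ := hker p hSp
    obtain ⟨ν, hν⟩ := hker q hSq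
    have hxj : x j = 1 := Pi.single_eq_same j 1
    have hyj : y j = 0 := Pi.single_eq_of_ne hjk 1
    have hxk : x k = 0 := Pi.single_eq_of_ne hjk.symm 1
    have hyk : y k = 1 := Pi.single_eq_same k 1
    have hxi : x i = 0 := Pi.single_eq_of_ne (Ne.symm hji) 1
    have hyi : y i = 0 := Pi.single_eq_of_ne (Ne.symm hki) 1
    have hμ2 : μ = g 2 := by
      have h := congrFun hμ i
      simp only [hp, Pi.add_apply, Pi.smul_apply, smul_eq_mul, hxi, hyi, mul_zero,
        zero_add, add_zero] at h
      exact (mul_right_cancel₀ hzi h).symm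
    have hν5 : ν = g 5 := by
      have h := congrFun hν i
      simp only [hq, Pi.add_apply, Pi.smul_apply, smul_eq_mul, hxi, hyi, mul_zero,
        zero_add, add_zero] at h
      exact (mul_right_cancel₀ hzi h).symm
    have hg0 : g 0 = 0 := by
      have := congrFun hμ j
      simp [hp, hxj, hyj, hμ2] at this
      linarith
    have hg1 : g 1 = 0 := by
      have := congrFun hμ k
      simp [hp, hxk, hyk, hμ2] at this
      linarith
    have hg3 : g 3 = 0 := by
      have := congrFun hν j
      simp [hq, hxj, hyj, hν5] at this
      linarith
    have hg4 : g 4 = 0 := by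
      have := congrFun hν k
      simp [hq, hxk, hyk, hν5] at this
      linarith
    have hrel : g 2 • (B₁ *ᵥ z) + g 5 • (B₂ *ᵥ z) = 0 := by
      rw [hg0, hg1, hg3, hg4] at hg'
      simpa using hg'
    have hg2 : g 2 = 0 := by
      by_contra hg2
      apply hnodep ((g 2)⁻¹ * (-(g 5)))
      have h : g 2 • (B₁ *ᵥ z) = (-(g 5)) • (B₂ *ᵥ z) := by
        rw [neg_smul]
        exact eq_neg_of_add_eq_zero_left hrel
      calc B₁ *ᵥ z = (g 2)⁻¹ • (g 2 • (B₁ *ᵥ z)) := by rw [inv_smul_smul₀ hg2]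
        _ = (g 2)⁻¹ • ((-(g 5)) • (B₂ *ᵥ z)) := by rw [h]
        _ = ((g 2)⁻¹ * (-(g 5))) • (B₂ *ᵥ z) := by rw [smul_smul]
    have hg5 : g 5 = 0 := by
      rw [hg2, zero_smul, zero_add, smul_eq_zero] at hrel
      exact hrel.resolve_right hB₂z
    intro n
    fin_cases n <;> assumption
  have hcard := hindep.fintype_card_le_finrank
  rw [Fintype.card_fin] at hcard
  omega

lemma exists_dep (m : ℕ) (ε : Fin m → ℝ) (B₁ B₂ : Matrix (Fin m) (Fin 3) ℝ)
    (hB₁ : B₁ᵀ * Matrix.diagonal ε * B₁ = 0)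
    (hB₂ : B₂ᵀ * Matrix.diagonal ε * B₂ = 0)
    (hskew : (B₁ᵀ * Matrix.diagonal ε * B₂)ᵀ = -(B₁ᵀ * Matrix.diagonal ε * B₂))
    (z : Fin 3 → ℝ) (hzne : z ≠ 0)
    (hker : ∀ p, (B₁ᵀ * Matrix.diagonal ε * B₂) *ᵥ p = 0 → ∃ μ : ℝ, p = μ • z)
    (hB₂z : B₂ *ᵥ z ≠ 0)
    (hdim : Module.finrank ℝ
      ↥(LinearMap.range B₁.mulVecLin ⊔ LinearMap.range B₂.mulVecLin) ≤ 5) :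
    ∃ μ : ℝ, B₁ *ᵥ z = μ • (B₂ *ᵥ z) := by
  by_contra hdep
  push_neg at hdep
  obtain ⟨i, hi⟩ : ∃ i, z i ≠ 0 := by
    by_contra h'
    push_neg at h'
    exact hzne (funext fun i => h' i)
  fin_cases i
  · exact indep_aux m ε B₁ B₂ hB₁ hB₂ hskew z hker hB₂z (fun μ => hdep μ) 0 1 2
      (by decide) (by decide) (by decide) hi hdim
  · exact indep_aux m ε B₁ B₂ hB₁ hB₂ hskew z hker hB₂z (fun μ => hdep μ) 1 0 2
      (by decide) (by decide) (by decide) hi hdim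
  · exact indep_aux m ε B₁ B₂ hB₁ hB₂ hskew z hker hB₂z (fun μ => hdep μ) 2 0 1
      (by decide) (by decide) (by decide) hi hdim

/-- if `k = 3`, `B₁ᵀĨB₂ ≠ 0` (i.e. `A₁A₂ ≠ 0`) and
`dim(im B₁ + im B₂) ≤ 5`, then `γ₃` has a fixed point. -/
theorem fixed_point_of_k_eq_three (k m : ℕ) (hk : k = 3) (hm : 1 ≤ m)
    (ε : Fin m → ℝ) (hε : ∀ i, ε i = 1 ∨ ε i = -1)
    (B₁ B₂ : Matrix (Fin m) (Fin k) ℝ)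
    (hB₁ : B₁ᵀ * Matrix.diagonal ε * B₁ = 0)
    (hB₂ : B₂ᵀ * Matrix.diagonal ε * B₂ = 0)
    (C₁ C₂ : Matrix (Fin k) (Fin k) ℝ) (hC₁ : C₁ᵀ = -C₁) (hC₂ : C₂ᵀ = -C₂)
    (u₁ u₂ u₁s u₂s u₃ : Fin k → ℝ) (w₁ w₂ : Fin m → ℝ) (v₁ v₂ v₃ : BV k m)
    (hv₁ : v₁ = (u₁, w₁, u₁s)) (hv₂ : v₂ = (u₂, w₂, u₂s)) (hv₃ : v₃ = (u₃, 0, 0))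
    (hA₁v₁ : Amap ε B₁ C₁ v₁ = 0) (hA₂v₂ : Amap ε B₂ C₂ v₂ = 0)
    (hskew : (B₁ᵀ * Matrix.diagonal ε * B₂)ᵀ = -(B₁ᵀ * Matrix.diagonal ε * B₂))
    (h12 : (2 : ℝ) • Amap ε B₁ C₁ v₂ = v₃)
    (h21 : (-2 : ℝ) • Amap ε B₂ C₂ v₁ = v₃)
    (hA₁A₂ : B₁ᵀ * Matrix.diagonal ε * B₂ ≠ 0)
    (hdim : Module.finrank ℝ
      ↥(LinearMap.range B₁.mulVecLin ⊔ LinearMap.range B₂.mulVecLin) ≤ 5) :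
    ∃ x : BV k m, x + (2 : ℝ) • Amap ε B₁ C₁ (Amap ε B₂ C₂ x) + v₃ = x := by
  subst hk
  subst hv₁ hv₂ hv₃
  set S := B₁ᵀ * Matrix.diagonal ε * B₂ with hSdef
  set z : Fin 3 → ℝ := ![S 1 2, -(S 0 2), S 0 1] with hzdef
  have hzne : z ≠ 0 := z_ne_zero S hskew hA₁A₂
  -- component equations
  simp only [Amap, Prod.ext_iff, Prod.smul_mk, Prod.mk_eq_zero, Prod.fst_zero, Prod.snd_zero]
    at hA₁v₁ hA₂v₂ h12 h21
  obtain ⟨e1, e2, -⟩ := hA₁v₁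
  obtain ⟨f1, f2, -⟩ := hA₂v₂
  obtain ⟨g1, g2, -⟩ := h12
  obtain ⟨k1, k2, -⟩ := h21
  -- g1 : 2 • (-(B₁ᵀD *ᵥ w₂) + C₁ *ᵥ u₂s) = u₃, g2 : 2 • (B₁ *ᵥ u₂s) = 0
  have hB1u2 : B₁ *ᵥ u₂s = 0 := by
    have := g2
    rwa [smul_eq_zero_iff_right (by norm_num : (2:ℝ) ≠ 0)] at this
  have hB2u1 : B₂ *ᵥ u₁s = 0 := by
    have := k2
    rwa [smul_eq_zero_iff_right (by norm_num : (-2:ℝ) ≠ 0)] at this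
  have hB1u1 : B₁ *ᵥ u₁s = 0 := e2
  have hB2u2 : B₂ *ᵥ u₂s = 0 := f2
  have hker : ∀ p, S *ᵥ p = 0 → ∃ μ : ℝ, p = μ • z := skew3_ker S hskew hzne
  -- the key orthogonality
  have hu3z : u₃ ⬝ᵥ z = 0 := by
    rcases eq_or_ne u₂s 0 with h2 | h2
    · rcases eq_or_ne u₁s 0 with h1 | h1
      · -- both zero
        rw [h1] at e1
        rw [h2] at f1
        simp only [Matrix.mulVec_zero, add_zero, neg_eq_zero] at e1 f1
        -- e1 : (B₁ᵀ * D) *ᵥ w₁ = 0, f1 : (B₂ᵀ * D) *ᵥ w₂ = 0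
        rw [h2] at g1
        rw [h1] at k1
        simp only [Matrix.mulVec_zero, add_zero] at g1 k1
        -- g1 : 2 • (-(B₁ᵀD *ᵥ w₂)) = u₃ ; k1 : -2 • (-(B₂ᵀD *ᵥ w₁)) = u₃
        by_cases hB2z : B₂ *ᵥ z = 0
        · rw [← k1]
          rw [smul_dotProduct, neg_dotProduct]
          have : ((B₂ᵀ * Matrix.diagonal ε) *ᵥ w₁) ⬝ᵥ z = 0 := by
            rw [tdd, hB2z, Matrix.mulVec_zero, dotProduct_zero]
          rw [this]
          simp
        · obtain ⟨μ, hμ⟩ := exists_dep m ε B₁ B₂ hB₁ hB₂ hskew z hzne hker hB2z hdim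
          rw [← g1]
          rw [smul_dotProduct, neg_dotProduct]
          have : ((B₁ᵀ * Matrix.diagonal ε) *ᵥ w₂) ⬝ᵥ z = 0 := by
            rw [tdd, hμ, Matrix.mulVec_smul, dotProduct_smul]
            have h0 : w₂ ⬝ᵥ (Matrix.diagonal ε *ᵥ (B₂ *ᵥ z)) = 0 := by
              rw [← tdd, f1, zero_dotProduct]
            rw [h0, smul_zero]
          rw [this]
          simp
      · -- u₁s ≠ 0
        have hSu : S *ᵥ u₁s = 0 := by
          rw [hSdef, ← Matrix.mulVec_mulVec, hB2u1, Matrix.mulVec_zero]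
        obtain ⟨μ, hμ⟩ := hker u₁s hSu
        have hμne : μ ≠ 0 := by
          rintro rfl
          rw [zero_smul] at hμ
          exact h1 hμ
        have hdot : u₃ ⬝ᵥ u₁s = 0 := by
          rw [← k1, smul_dotProduct, add_dotProduct, neg_dotProduct,
            tdd, hB2u1, Matrix.mulVec_zero, dotProduct_zero, skewquad C₂ hC₂ u₁s]
          simp
        rw [hμ, dotProduct_smul, smul_eq_mul] at hdot
        rcases mul_eq_zero.mp hdot with h | h
        · exact absurd h hμne
        · exact h
    · -- u₂s ≠ 0
      have hSu : S *ᵥ u₂s = 0 := by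
        rw [hSdef, ← Matrix.mulVec_mulVec, hB2u2, Matrix.mulVec_zero]
      obtain ⟨μ, hμ⟩ := hker u₂s hSu
      have hμne : μ ≠ 0 := by
        rintro rfl
        rw [zero_smul] at hμ
        exact h2 hμ
      have hdot : u₃ ⬝ᵥ u₂s = 0 := by
        rw [← g1, smul_dotProduct, add_dotProduct, neg_dotProduct,
          tdd, hB1u2, Matrix.mulVec_zero, dotProduct_zero, skewquad C₁ hC₁ u₂s]
        simp
      rw [hμ, dotProduct_smul, smul_eq_mul] at hdot
      rcases mul_eq_zero.mp hdot with h | h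
      · exact absurd h hμne
      · exact h
  obtain ⟨t, ht⟩ := skew3_range S hskew hzne u₃ hu3z
  refine ⟨(0, 0, (2:ℝ)⁻¹ • t), ?_⟩
  have hmv : (B₁ᵀ * Matrix.diagonal ε) *ᵥ (B₂ *ᵥ ((2:ℝ)⁻¹ • t)) = (2:ℝ)⁻¹ • u₃ := by
    rw [Matrix.mulVec_smul, Matrix.mulVec_smul, Matrix.mulVec_mulVec, ← hSdef, ht]
  simp only [Amap, Prod.mk_add_mk, Prod.smul_mk, Prod.mk.injEq, Matrix.mulVec_zero, add_zero,
    hmv]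
  refine ⟨?_, ?_, ?_⟩
  · rw [smul_neg, smul_smul]
    norm_num
  · simp
  · simp


end
end

section
/- In the block setting, if k = 4, B₁ᵀĨB₂ ≠ 0 (i.e. A₁A₂ ≠ 0), and rk(B₁ᵀĨB₂) = rk B₁ = rk B₂, then the affine map γ₃ has a fixed point in ℝⁿ. -/
open Matrix

noncomputable section

/-- If `M *ᵥ z = 0` then `z` is orthogonal to everything of the form `(Mᵀ * diag ε) *ᵥ w`. -/
lemma dot_kernel_aux {k m : ℕ} (ε : Fin m → ℝ) (M : Matrix (Fin m) (Fin k) ℝ)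
    {z : Fin k → ℝ} (hz : M *ᵥ z = 0) (w : Fin m → ℝ) :
    z ⬝ᵥ ((Mᵀ * Matrix.diagonal ε) *ᵥ w) = 0 := by
  rw [Matrix.dotProduct_mulVec, ← Matrix.vecMul_vecMul, Matrix.vecMul_transpose, hz,
    Matrix.zero_vecMul, zero_dotProduct]

lemma dot_mulVec_left {k : ℕ} (C : Matrix (Fin k) (Fin k) ℝ) (u w : Fin k → ℝ) :
    u ⬝ᵥ (C *ᵥ w) = (Cᵀ *ᵥ u) ⬝ᵥ w := by
  rw [Matrix.dotProduct_mulVec, Matrix.mulVec_transpose]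

lemma dot_skew_self {k : ℕ} {C : Matrix (Fin k) (Fin k) ℝ} (hC : Cᵀ = -C) (v : Fin k → ℝ) :
    v ⬝ᵥ (C *ᵥ v) = 0 := by
  have h := dot_mulVec_left C v v
  rw [hC, Matrix.neg_mulVec, neg_dotProduct] at h
  have h2 : (C *ᵥ v) ⬝ᵥ v = v ⬝ᵥ (C *ᵥ v) := dotProduct_comm _ _
  linarith

/-- rank-nullity for matrices. -/
lemma rank_add_ker {p q : ℕ} (M : Matrix (Fin p) (Fin q) ℝ) :
    M.rank + Module.finrank ℝ (LinearMap.ker M.mulVecLin) = q := by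
  have h := LinearMap.finrank_range_add_finrank_ker M.mulVecLin
  simpa [Matrix.rank] using h

/-- A real skew-symmetric matrix maps onto the orthogonal complement of its kernel. -/
lemma skew_surj_on_orth {n : ℕ} (D : Matrix (Fin n) (Fin n) ℝ) (hD : Dᵀ = -D)
    (x : Fin n → ℝ) (hx : ∀ z : Fin n → ℝ, D *ᵥ z = 0 → z ⬝ᵥ x = 0) :
    ∃ y : Fin n → ℝ, D *ᵥ y = x := by
  classical
  set e := WithLp.equiv 2 (Fin n → ℝ) with he
  set T : EuclideanSpace ℝ (Fin n) →ₗ[ℝ] EuclideanSpace ℝ (Fin n) :=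
    Matrix.toEuclideanLin D with hT
  have hTapp : ∀ v : EuclideanSpace ℝ (Fin n), e (T v) = D *ᵥ e v := fun v => rfl
  have hker : ∀ v : EuclideanSpace ℝ (Fin n), v ∈ LinearMap.ker T ↔ D *ᵥ e v = 0 := by
    intro v
    rw [LinearMap.mem_ker]
    constructor
    · intro h
      rw [← hTapp, h]
      rfl
    · intro h
      have : e (T v) = e 0 := by rw [hTapp, h]; rfl
      exact e.injective this
  have hinner : ∀ a b : EuclideanSpace ℝ (Fin n), (inner ℝ a b : ℝ) = (e a) ⬝ᵥ (e b) := by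
    intro a b
    simp [PiLp.inner_apply, RCLike.inner_apply, dotProduct, he, mul_comm]
  set K := LinearMap.ker T with hK
  have hle : LinearMap.range T ≤ Kᗮ := by
    rintro _ ⟨v, rfl⟩
    intro k hk
    have hk0 : D *ᵥ e k = 0 := (hker k).1 hk
    rw [hinner, hTapp, Matrix.dotProduct_mulVec, ← Matrix.mulVec_transpose, hD,
      Matrix.neg_mulVec, hk0, neg_zero, zero_dotProduct]
  have hfin1 : Module.finrank ℝ (LinearMap.range T) + Module.finrank ℝ K = n := by
    simpa using LinearMap.finrank_range_add_finrank_ker T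
  have hfin2 : Module.finrank ℝ K + Module.finrank ℝ Kᗮ = n := by
    simpa using K.finrank_add_finrank_orthogonal
  have heq : LinearMap.range T = Kᗮ :=
    Submodule.eq_of_le_of_finrank_le hle (by omega)
  have hxmem : e.symm x ∈ Kᗮ := by
    rw [Submodule.mem_orthogonal]
    intro k hk
    rw [hinner]
    have : e (e.symm x) = x := e.apply_symm_apply x
    rw [this]
    exact hx _ ((hker k).1 hk)
  rw [← heq] at hxmem
  obtain ⟨y, hy⟩ := hxmem
  refine ⟨e y, ?_⟩
  have := congrArg e hy
  rw [hTapp] at this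
  rw [this]
  exact e.apply_symm_apply x

/-- if `k = 4`, `B₁ᵀĨB₂ ≠ 0` (i.e. `A₁A₂ ≠ 0`) and
`rk(B₁ᵀĨB₂) = rk B₁ = rk B₂`, then `γ₃` has a fixed point. -/
theorem fixed_point_of_k_eq_four (k m : ℕ) (hk : k = 4) (hm : 1 ≤ m)
    (ε : Fin m → ℝ) (hε : ∀ i, ε i = 1 ∨ ε i = -1)
    (B₁ B₂ : Matrix (Fin m) (Fin k) ℝ)
    (hB₁ : B₁ᵀ * Matrix.diagonal ε * B₁ = 0)
    (hB₂ : B₂ᵀ * Matrix.diagonal ε * B₂ = 0)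
    (C₁ C₂ : Matrix (Fin k) (Fin k) ℝ) (hC₁ : C₁ᵀ = -C₁) (hC₂ : C₂ᵀ = -C₂)
    (u₁ u₂ u₁s u₂s u₃ : Fin k → ℝ) (w₁ w₂ : Fin m → ℝ) (v₁ v₂ v₃ : BV k m)
    (hv₁ : v₁ = (u₁, w₁, u₁s)) (hv₂ : v₂ = (u₂, w₂, u₂s)) (hv₃ : v₃ = (u₃, 0, 0))
    (hA₁v₁ : Amap ε B₁ C₁ v₁ = 0) (hA₂v₂ : Amap ε B₂ C₂ v₂ = 0)
    (hskew : (B₁ᵀ * Matrix.diagonal ε * B₂)ᵀ = -(B₁ᵀ * Matrix.diagonal ε * B₂))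
    (h12 : (2 : ℝ) • Amap ε B₁ C₁ v₂ = v₃)
    (h21 : (-2 : ℝ) • Amap ε B₂ C₂ v₁ = v₃)
    (hA₁A₂ : B₁ᵀ * Matrix.diagonal ε * B₂ ≠ 0)
    (hrk₁ : (B₁ᵀ * Matrix.diagonal ε * B₂).rank = B₁.rank)
    (hrk₂ : B₁.rank = B₂.rank) :
    ∃ x : BV k m, x + (2 : ℝ) • Amap ε B₁ C₁ (Amap ε B₂ C₂ x) + v₃ = x := by
  subst hk hv₁ hv₂ hv₃
  set D := B₁ᵀ * Matrix.diagonal ε * B₂ with hD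
  -- component equations
  rw [Amap, Prod.ext_iff, Prod.ext_iff] at hA₁v₁ hA₂v₂
  obtain ⟨e1, e2, -⟩ := hA₁v₁
  obtain ⟨e3, e4, -⟩ := hA₂v₂
  rw [Amap, Prod.smul_mk, Prod.smul_mk, Prod.ext_iff, Prod.ext_iff] at h12 h21
  obtain ⟨e5, e6, -⟩ := h12
  obtain ⟨e7, e8, -⟩ := h21
  simp only [Prod.fst_zero, Prod.snd_zero] at e1 e2 e3 e4 e5 e6 e7 e8
  have hB₁u₂s : B₁ *ᵥ u₂s = 0 := by
    have h := e6
    rw [smul_eq_zero] at h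
    rcases h with h | h
    · norm_num at h
    · exact h
  have hB₂u₁s : B₂ *ᵥ u₁s = 0 := by
    have h := e8
    rw [smul_eq_zero] at h
    rcases h with h | h
    · norm_num at h
    · exact h
  have e1' : C₁ *ᵥ u₁s = (B₁ᵀ * Matrix.diagonal ε) *ᵥ w₁ := by
    have := e1; rw [neg_add_eq_zero] at this; exact this.symm
  have e3' : C₂ *ᵥ u₂s = (B₂ᵀ * Matrix.diagonal ε) *ᵥ w₂ := by
    have := e3; rw [neg_add_eq_zero] at this; exact this.symm
  -- kernel identifications
  have hK2le : LinearMap.ker B₂.mulVecLin ≤ LinearMap.ker D.mulVecLin := by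
    intro z hz
    rw [LinearMap.mem_ker, Matrix.mulVecLin_apply] at hz ⊢
    rw [hD, ← Matrix.mulVec_mulVec, hz, Matrix.mulVec_zero]
  have hK1le : LinearMap.ker B₁.mulVecLin ≤ LinearMap.ker D.mulVecLin := by
    intro z hz
    rw [LinearMap.mem_ker, Matrix.mulVecLin_apply] at hz ⊢
    have h1 : Dᵀ *ᵥ z = 0 := by
      rw [hD, Matrix.transpose_mul, Matrix.transpose_mul, Matrix.diagonal_transpose,
        Matrix.transpose_transpose, ← Matrix.mul_assoc, ← Matrix.mulVec_mulVec,
        ← Matrix.mulVec_mulVec, hz, Matrix.mulVec_zero, Matrix.mulVec_zero]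
    rw [hskew, Matrix.neg_mulVec, neg_eq_zero] at h1
    exact h1
  have hrnD := rank_add_ker D
  have hrnB₁ := rank_add_ker B₁
  have hrnB₂ := rank_add_ker B₂
  have hker2 : LinearMap.ker D.mulVecLin = LinearMap.ker B₂.mulVecLin :=
    (Submodule.eq_of_le_of_finrank_le hK2le (by
      have h := hrk₁.trans hrk₂; omega)).symm
  have hker1 : LinearMap.ker D.mulVecLin = LinearMap.ker B₁.mulVecLin :=
    (Submodule.eq_of_le_of_finrank_le hK1le (by omega)).symm
  -- rank D ≥ 2
  have hrkD2 : 2 ≤ D.rank := by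
    obtain ⟨i, j, hij⟩ : ∃ i j, D i j ≠ 0 := by
      by_contra h
      push_neg at h
      exact hA₁A₂ (Matrix.ext fun i j => h i j)
    have hji : D j i = -D i j := by
      have := congrFun (congrFun hskew i) j
      simpa [Matrix.transpose_apply] using this
    have hii : D i i = 0 := by
      have := congrFun (congrFun hskew i) i
      simp only [Matrix.transpose_apply, Matrix.neg_apply] at this
      linarith
    have hjj : D j j = 0 := by
      have := congrFun (congrFun hskew j) j
      simp only [Matrix.transpose_apply, Matrix.neg_apply] at this
      linarith
    have hind : LinearIndependent ℝ ![fun r => D r i, fun r => D r j] := by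
      rw [LinearIndependent.pair_iff]
      intro s t hst
      have h1 := congrFun hst i
      have h2 := congrFun hst j
      simp only [Pi.add_apply, Pi.smul_apply, smul_eq_mul, Pi.zero_apply, hii, hjj, hji] at h1 h2
      constructor
      · rcases mul_eq_zero.1 (by linarith : s * (-D i j) = 0) with h | h
        · exact h
        · exfalso; exact hij (by linarith)
      · rcases mul_eq_zero.1 (by linarith : t * D i j = 0) with h | h
        · exact h
        · exact absurd h hij
    have hspan : Submodule.span ℝ (Set.range ![fun r => D r i, fun r => D r j]) ≤
        LinearMap.range D.mulVecLin := by
      rw [Submodule.span_le]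
      rintro _ ⟨a, rfl⟩
      fin_cases a
      · exact ⟨Pi.single i 1, by funext r; simp [Matrix.mulVecLin_apply, Matrix.mulVec_single]⟩
      · exact ⟨Pi.single j 1, by funext r; simp [Matrix.mulVecLin_apply, Matrix.mulVec_single]⟩
    have h2 : Module.finrank ℝ
        (Submodule.span ℝ (Set.range ![fun r => D r i, fun r => D r j])) = 2 := by
      rw [finrank_span_eq_card hind]
      simp
    calc (2 : ℕ) = _ := h2.symm
      _ ≤ Module.finrank ℝ (LinearMap.range D.mulVecLin) := Submodule.finrank_mono hspan
      _ = D.rank := rfl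
  -- key orthogonality
  have horth : ∀ z : Fin 4 → ℝ, D *ᵥ z = 0 → z ⬝ᵥ u₃ = 0 := by
    intro z hz
    have hz' : z ∈ LinearMap.ker D.mulVecLin := by
      rw [LinearMap.mem_ker, Matrix.mulVecLin_apply]; exact hz
    have hzB₁ : B₁ *ᵥ z = 0 := by
      have := hker1 ▸ hz'
      rwa [LinearMap.mem_ker, Matrix.mulVecLin_apply] at this
    have hzB₂ : B₂ *ᵥ z = 0 := by
      have := hker2 ▸ hz'
      rwa [LinearMap.mem_ker, Matrix.mulVecLin_apply] at this
    have hu₃C₁ : z ⬝ᵥ u₃ = 2 * (z ⬝ᵥ (C₁ *ᵥ u₂s)) := by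
      rw [← e5]
      rw [dotProduct_smul, dotProduct_add, dotProduct_neg,
        dot_kernel_aux ε B₁ hzB₁ w₂]
      simp only [neg_zero, zero_add, smul_eq_mul]
    have hu₃C₂ : z ⬝ᵥ u₃ = -2 * (z ⬝ᵥ (C₂ *ᵥ u₁s)) := by
      rw [← e7]
      rw [dotProduct_smul, dotProduct_add, dotProduct_neg,
        dot_kernel_aux ε B₂ hzB₂ w₁]
      simp only [neg_zero, zero_add, smul_eq_mul]
    by_cases hli : LinearIndependent ℝ ![u₁s, u₂s]
    · -- independent case : u₁s, u₂s span the kernel of D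
      have hmem₁ : u₁s ∈ LinearMap.ker D.mulVecLin := by
        rw [hker2, LinearMap.mem_ker, Matrix.mulVecLin_apply, hB₂u₁s]
      have hmem₂ : u₂s ∈ LinearMap.ker D.mulVecLin := by
        rw [hker2, LinearMap.mem_ker, Matrix.mulVecLin_apply, e4]
      have hsp : Submodule.span ℝ (Set.range ![u₁s, u₂s]) ≤ LinearMap.ker D.mulVecLin := by
        rw [Submodule.span_le]
        rintro _ ⟨a, rfl⟩
        fin_cases a
        · exact hmem₁
        · exact hmem₂
      have hsp2 : Module.finrank ℝ (Submodule.span ℝ (Set.range ![u₁s, u₂s])) = 2 := by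
        rw [finrank_span_eq_card hli]; simp
      have hKeq : Submodule.span ℝ (Set.range ![u₁s, u₂s]) = LinearMap.ker D.mulVecLin :=
        Submodule.eq_of_le_of_finrank_le hsp (by omega)
      -- z is a combination of u₁s and u₂s
      have hrange2 : Set.range ![u₁s, u₂s] = ({u₁s, u₂s} : Set (Fin 4 → ℝ)) := by
        ext v
        simp [Fin.exists_fin_two, or_comm]
      have hzmem : z ∈ Submodule.span ℝ ({u₁s, u₂s} : Set (Fin 4 → ℝ)) := by
        rw [← hrange2, hKeq]
        exact hz'
      obtain ⟨a, b, hab⟩ := Submodule.mem_span_pair.1 hzmem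
      have hd1 : u₁s ⬝ᵥ (C₁ *ᵥ u₂s) = 0 := by
        rw [dot_mulVec_left, hC₁, Matrix.neg_mulVec, e1', neg_dotProduct,
          dotProduct_comm, dot_kernel_aux ε B₁ hB₁u₂s w₁, neg_zero]
      have hd2 : u₂s ⬝ᵥ (C₁ *ᵥ u₂s) = 0 := dot_skew_self hC₁ u₂s
      rw [hu₃C₁, ← hab, add_dotProduct, smul_dotProduct,
        smul_dotProduct, hd1, hd2]
      simp
    · rw [LinearIndependent.pair_iff] at hli
      push_neg at hli
      obtain ⟨s, t, hst, hs⟩ := hli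
      by_cases ht : t = 0
      · -- then s ≠ 0 and u₁s = 0
        have hsne : s ≠ 0 := fun h0 => hs h0 ht
        have hu1s : u₁s = 0 := by
          rw [ht, zero_smul, add_zero, smul_eq_zero] at hst
          exact hst.resolve_left hsne
        rw [hu₃C₂, hu1s, Matrix.mulVec_zero, dotProduct_zero, mul_zero]
      · -- u₂s is a multiple of u₁s
        have h' : t • u₂s = (-s) • u₁s := by
          rw [neg_smul, eq_neg_iff_add_eq_zero, add_comm]
          exact hst
        have hu2s : u₂s = (t⁻¹ * -s) • u₁s := by
          calc u₂s = t⁻¹ • (t • u₂s) := by rw [smul_smul, inv_mul_cancel₀ ht, one_smul]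
          _ = t⁻¹ • ((-s) • u₁s) := by rw [h']
          _ = (t⁻¹ * -s) • u₁s := smul_smul _ _ _
        have hz1 : z ⬝ᵥ (C₁ *ᵥ u₁s) = 0 := by
          rw [e1']
          exact dot_kernel_aux ε B₁ hzB₁ w₁
        rw [hu₃C₁, hu2s, Matrix.mulVec_smul, dotProduct_smul, smul_eq_mul, hz1,
          mul_zero, mul_zero]
  obtain ⟨y, hy⟩ := skew_surj_on_orth D hskew u₃ horth
  refine ⟨(0, 0, (2⁻¹ : ℝ) • y), ?_⟩
  have houter : Amap ε B₁ C₁ (Amap ε B₂ C₂ (0, 0, (2⁻¹ : ℝ) • y)) =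
      (-((2⁻¹ : ℝ) • u₃), 0, 0) := by
    simp only [Amap, Matrix.mulVec_zero, neg_zero, zero_add]
    rw [Matrix.mulVec_mulVec, ← hD, Matrix.mulVec_smul, hy]
    simp
  rw [houter]
  have hsmul : ((2 : ℝ) • ((-((2⁻¹ : ℝ) • u₃), (0 : Fin m → ℝ), (0 : Fin 4 → ℝ)) : BV 4 m)) =
      ((-u₃, 0, 0) : BV 4 m) := by
    rw [Prod.smul_mk, Prod.smul_mk]
    refine congrArg₂ Prod.mk ?_ (congrArg₂ Prod.mk ?_ ?_)
    · rw [smul_neg, smul_smul]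
      norm_num
    · simp
    · simp
  rw [hsmul, Prod.ext_iff, Prod.ext_iff]
  refine ⟨?_, ?_, ?_⟩ <;> simp
end
end

section
/- Let m ≥ 1, n = m + 4, write vectors of ℝⁿ as triples (u, w, u*) with u, u* ∈ ℝ², w ∈ ℝᵐ, and equip ℝⁿ with the bilinear form ⟨(u,w,u*),(u',w',u'')⟩ = uᵀu'' + (u*)ᵀu' + wᵀw' of signature (n−2, 2). Let J = [[0,1],[−1,0]], and for i = 1, …, k let cᵢ ∈ ℝ, uᵢ ∈ ℝ², wᵢ ∈ ℝᵐ, let Aᵢ : ℝⁿ → ℝⁿ be the linear map (u,w,u*) ↦ (cᵢ J u*, 0, 0), vᵢ = (uᵢ, wᵢ, 0), and γᵢ : x ↦ x + Aᵢx + vᵢ. Assume v₁, …, v_k are linearly independent and that for all λ₁, …, λ_k ∈ ℝ, Σᵢ λᵢwᵢ = 0 implies Σᵢ λᵢcᵢ = 0. Then the group Γ generated by γ₁, …, γ_k is a subgroup of the isometry group of the form, its centralizer in this isometry group acts transitively on ℝⁿ, and Γ acts freely and properly discontinuously on ℝⁿ (for every compact set K ⊆ ℝⁿ only finitely many γ ∈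 Γ satisfy γK ∩ K ≠ ∅). -/
open Matrix

noncomputable section

/-- Vectors of `ℝⁿ` (`n = m + 4`) written as triples `(u, w, u*)`,
`u, u* ∈ ℝ²`, `w ∈ ℝᵐ`. -/
abbrev V14 (m : ℕ) := (Fin 2 → ℝ) × (Fin m → ℝ) × (Fin 2 → ℝ)

/-- The bilinear form `⟨(u,w,u*),(u',w',u'')⟩ = uᵀu'' + (u*)ᵀu' + wᵀw'`
of signature `(n-2, 2)`. -/
def form14 {m : ℕ} (x y : V14 m) : ℝ :=
  x.1 ⬝ᵥ y.2.2 + x.2.2 ⬝ᵥ y.1 + x.2.1 ⬝ᵥ y.2.1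

/-- `J = [[0,1],[-1,0]]`. -/
def J : Matrix (Fin 2) (Fin 2) ℝ := !![0, 1; -1, 0]

/-- The linear map `A : (u, w, u*) ↦ (c J u*, 0, 0)`. -/
def A14 {m : ℕ} (c : ℝ) : V14 m →ₗ[ℝ] V14 m where
  toFun x := (c • (J *ᵥ x.2.2), 0, 0)
  map_add' a b := by
    simp [Matrix.mulVec_add, smul_add, Prod.ext_iff]
    constructor <;> ring
  map_smul' r a := by
    simp [Matrix.mulVec_smul, Prod.ext_iff, smul_comm r c]
    constructor <;> ring

lemma A14_sq {m : ℕ} (c : ℝ) (x : V14 m) : A14 (m := m) c (A14 c x) = 0 := by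
  simp [A14, Matrix.mulVec_zero, Prod.ext_iff]

/-- The linear equivalence `I + A`. -/
def L14 {m : ℕ} (c : ℝ) : V14 m ≃ₗ[ℝ] V14 m :=
  LinearEquiv.ofLinear (LinearMap.id + A14 c) (LinearMap.id - A14 c)
    (by
      apply LinearMap.ext; intro x
      simp only [LinearMap.comp_apply, LinearMap.add_apply, LinearMap.sub_apply,
        LinearMap.id_apply, map_sub, A14_sq]
      abel)
    (by
      apply LinearMap.ext; intro x
      simp only [LinearMap.comp_apply, LinearMap.add_apply, LinearMap.sub_apply,
        LinearMap.id_apply, map_add, A14_sq]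
      abel)

/-- The affine transformation `γ : x ↦ x + Ax + v` (an affine equivalence since
`(I + A)⁻¹ = I - A`). -/
def gamma14 {m : ℕ} (c : ℝ) (v : V14 m) : V14 m ≃ᵃ[ℝ] V14 m :=
  (L14 c).toAffineEquiv.trans (AffineEquiv.constVAdd ℝ (V14 m) v)

/-- The isometry group of the form `form14`. -/
def Iso14 (m : ℕ) : Subgroup (V14 m ≃ᵃ[ℝ] V14 m) where
  carrier := { γ | ∀ x y, form14 (γ.linear x) (γ.linear y) = form14 x y }
  one_mem' := by intro x y; rfl
  mul_mem' := by
    intro a b ha hb x y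
    have h : (a * b).linear x = a.linear (b.linear x) := rfl
    have h' : (a * b).linear y = a.linear (b.linear y) := rfl
    rw [h, h', ha, hb]
  inv_mem' := by
    intro a ha x y
    have h : a.linear ((a⁻¹).linear x) = x := a.linear.apply_symm_apply x
    have h' : a.linear ((a⁻¹).linear y) = y := a.linear.apply_symm_apply y
    calc form14 ((a⁻¹).linear x) ((a⁻¹).linear y)
        = form14 (a.linear ((a⁻¹).linear x)) (a.linear ((a⁻¹).linear y)) := (ha _ _).symm
      _ = form14 x y := by rw [h, h']

variable {m : ℕ}

lemma gamma14_apply (c : ℝ) (v x : V14 m) :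
    gamma14 c v x = (v.1 + (x.1 + c • (J *ᵥ x.2.2)), v.2.1 + x.2.1, v.2.2 + x.2.2) := by
  show v +ᵥ ((LinearMap.id + A14 c : V14 m →ₗ[ℝ] V14 m) x) = _
  simp only [LinearMap.add_apply, LinearMap.id_apply, vadd_eq_add, A14,
    LinearMap.coe_mk, AddHom.coe_mk, Prod.mk_add_mk, Prod.ext_iff]
  simp [Prod.ext_iff, add_comm]

lemma gamma14_mul (c c' : ℝ) (v v' : V14 m) (h : v'.2.2 = 0) :
    gamma14 c v * gamma14 c' v' = gamma14 (c + c') (v + v') := by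
  apply AffineEquiv.ext
  intro x
  show gamma14 c v (gamma14 c' v' x) = _
  simp only [gamma14_apply, h, Prod.mk.injEq, Prod.fst_add, Prod.snd_add,
    Matrix.mulVec_add, smul_add, add_smul, zero_add]
  refine ⟨?_, ?_, ?_⟩ <;> abel

lemma gamma14_one : gamma14 (m := m) 0 0 = 1 := by
  apply AffineEquiv.ext
  intro x
  show gamma14 0 0 x = x
  simp [gamma14_apply, Prod.ext_iff]

lemma gamma14_inv (c : ℝ) (v : V14 m) (h : v.2.2 = 0) :
    (gamma14 c v)⁻¹ = gamma14 (-c) (-v) := by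
  have h' : (-v).2.2 = 0 := by simp [h]
  have := gamma14_mul (-c) c (-v) v h
  rw [neg_add_cancel, neg_add_cancel, gamma14_one] at this
  exact (eq_inv_of_mul_eq_one_left this).symm

lemma gamma14_linear (c : ℝ) (v : V14 m) (x : V14 m) :
    (gamma14 c v).linear x = (x.1 + c • (J *ᵥ x.2.2), x.2.1, x.2.2) := by
  have : (gamma14 c v).linear (x - 0) = gamma14 c v x - gamma14 c v 0 :=
    (gamma14 c v).toAffineMap.linearMap_vsub x 0
  rw [sub_zero] at this
  rw [this, gamma14_apply, gamma14_apply]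
  simp [Prod.ext_iff]


lemma J_antisym (a b : Fin 2 → ℝ) : (J *ᵥ a) ⬝ᵥ b = -(a ⬝ᵥ (J *ᵥ b)) := by
  simp [_root_.J, Matrix.mulVec, dotProduct, Fin.sum_univ_two]

lemma gamma14_mem_Iso (c : ℝ) (v : V14 m) : gamma14 c v ∈ Iso14 m := by
  intro x y
  simp only [gamma14_linear, form14, add_dotProduct, dotProduct_add, smul_dotProduct,
    dotProduct_smul, smul_eq_mul, J_antisym]
  ring

lemma sum_smul_v_snd_snd {k : ℕ} (v : Fin k → V14 m) (hv3 : ∀ i, (v i).2.2 = 0)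
    (r : Fin k → ℝ) : (∑ i, r i • v i).2.2 = 0 := by
  rw [Prod.snd_sum, Prod.snd_sum]
  apply Finset.sum_eq_zero
  intro i _
  show r i • (v i).2.2 = 0
  rw [hv3 i, smul_zero]

lemma mem_closure_rep {k : ℕ} (c : Fin k → ℝ) (v : Fin k → V14 m)
    (hv3 : ∀ i, (v i).2.2 = 0) {g : V14 m ≃ᵃ[ℝ] V14 m}
    (hg : g ∈ Subgroup.closure (Set.range fun i => gamma14 (c i) (v i))) :
    ∃ n : Fin k → ℤ, g = gamma14 (∑ i, (n i : ℝ) * c i) (∑ i, (n i : ℝ) • v i) := by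
  induction hg using Subgroup.closure_induction with
  | mem x hx =>
    obtain ⟨i, rfl⟩ := hx
    refine ⟨fun j => if j = i then 1 else 0, ?_⟩
    have h1 : (∑ j, ((if j = i then (1:ℤ) else 0 : ℤ) : ℝ) * c j) = c i := by
      rw [Finset.sum_eq_single i] <;> simp +contextual
    have h2 : (∑ j, ((if j = i then (1:ℤ) else 0 : ℤ) : ℝ) • v j) = v i := by
      rw [Finset.sum_eq_single i] <;> simp +contextual
    rw [h1, h2]
  | one =>
    refine ⟨0, ?_⟩
    have h1 : (∑ i, (((0 : Fin k → ℤ) i : ℝ)) * c i) = 0 := by simp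
    have h2 : (∑ i, (((0 : Fin k → ℤ) i : ℝ)) • v i) = 0 := by simp
    rw [h1, h2, gamma14_one]
  | mul x y hx hy ihx ihy =>
    obtain ⟨n, rfl⟩ := ihx
    obtain ⟨n', rfl⟩ := ihy
    refine ⟨n + n', ?_⟩
    rw [gamma14_mul _ _ _ _ (sum_smul_v_snd_snd v hv3 _)]
    have h1 : (∑ i, (n i : ℝ) * c i) + (∑ i, (n' i : ℝ) * c i)
        = ∑ i, (((n + n') i : ℤ) : ℝ) * c i := by
      rw [← Finset.sum_add_distrib]
      congr 1; funext i; simp only [Pi.add_apply, Pi.neg_apply, Int.cast_add, Int.cast_neg]; ring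
    have h2 : (∑ i, (n i : ℝ) • v i) + (∑ i, (n' i : ℝ) • v i)
        = ∑ i, (((n + n') i : ℤ) : ℝ) • v i := by
      rw [← Finset.sum_add_distrib]
      congr 1; funext i; simp only [Pi.add_apply, Int.cast_add]; rw [add_smul]
    rw [h1, h2]
  | inv x hx ih =>
    obtain ⟨n, rfl⟩ := ih
    refine ⟨-n, ?_⟩
    rw [gamma14_inv _ _ (sum_smul_v_snd_snd v hv3 _)]
    have h1 : -(∑ i, (n i : ℝ) * c i) = ∑ i, (((-n) i : ℤ) : ℝ) * c i := by
      rw [← Finset.sum_neg_distrib]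
      congr 1; funext i; simp only [Pi.add_apply, Pi.neg_apply, Int.cast_add, Int.cast_neg]; ring
    have h2 : -(∑ i, (n i : ℝ) • v i) = ∑ i, (((-n) i : ℤ) : ℝ) • v i := by
      rw [← Finset.sum_neg_distrib]
      congr 1; funext i; simp only [Pi.neg_apply, Int.cast_neg]; rw [neg_smul]
    rw [h1, h2]

lemma exists_factor {k : ℕ} (c : Fin k → ℝ) (w : Fin k → Fin m → ℝ)
    (hlam : ∀ lam : Fin k → ℝ, ∑ i, lam i • w i = 0 → ∑ i, lam i * c i = 0) :
    ∃ φ : (Fin m → ℝ) →ₗ[ℝ] ℝ, ∀ i, φ (w i) = c i := by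
  set T : (Fin k → ℝ) →ₗ[ℝ] (Fin m → ℝ) :=
    ∑ i : Fin k, (LinearMap.proj i : (Fin k → ℝ) →ₗ[ℝ] ℝ).smulRight (w i) with hT
  set S : (Fin k → ℝ) →ₗ[ℝ] ℝ :=
    ∑ i : Fin k, (LinearMap.proj i : (Fin k → ℝ) →ₗ[ℝ] ℝ).smulRight (c i) with hS
  have hTapp : ∀ lam, T lam = ∑ i, lam i • w i := by
    intro lam
    simp [hT, LinearMap.sum_apply]
  have hSapp : ∀ lam, S lam = ∑ i, lam i * c i := by
    intro lam
    simp [hS, LinearMap.sum_apply]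
  have hker : LinearMap.ker T ≤ LinearMap.ker S := by
    intro x hx
    rw [LinearMap.mem_ker] at hx ⊢
    rw [hSapp]
    exact hlam x (by rw [← hTapp]; exact hx)
  set Sbar := (LinearMap.ker T).liftQ S hker with hSbar
  set e := T.quotKerEquivRange with he
  obtain ⟨φ, hφ⟩ := LinearMap.exists_extend (Sbar ∘ₗ (e.symm : _ ≃ₗ[ℝ] _).toLinearMap)
  refine ⟨φ, fun i => ?_⟩
  have hwi : w i = T (Pi.single i 1) := by
    rw [hTapp, Finset.sum_eq_single i] <;> simp +contextual [Pi.single_apply]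
  have hmem : w i ∈ LinearMap.range T := ⟨Pi.single i 1, hwi.symm⟩
  have : φ (w i) = (Sbar ∘ₗ (e.symm : _ ≃ₗ[ℝ] _).toLinearMap) ⟨w i, hmem⟩ := by
    rw [← hφ]; rfl
  rw [this]
  have hsymm : e.symm ⟨w i, hmem⟩ = Submodule.Quotient.mk (Pi.single i 1) := by
    rw [LinearEquiv.symm_apply_eq]
    apply Subtype.ext
    rw [LinearMap.quotKerEquivRange_apply_mk]
    exact hwi
  simp only [LinearMap.comp_apply, LinearEquiv.coe_coe, hsymm]
  rw [Submodule.liftQ_apply, hSapp, Finset.sum_eq_single i] <;>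
    simp +contextual [Pi.single_apply]

lemma exists_dual {k : ℕ} (v : Fin k → V14 m) (hind : LinearIndependent ℝ v) :
    ∃ f : Fin k → (V14 m →ₗ[ℝ] ℝ), ∀ j i, f j (v i) = if i = j then 1 else 0 := by
  obtain ⟨q, hq⟩ := (Submodule.span ℝ (Set.range v)).exists_isCompl
  set proj := (Submodule.span ℝ (Set.range v)).linearProjOfIsCompl q hq with hproj
  refine ⟨fun j => (Finsupp.lapply j) ∘ₗ (hind.repr : _ →ₗ[ℝ] _) ∘ₗ proj, fun j i => ?_⟩
  have hvm : v i ∈ Submodule.span ℝ (Set.range v) :=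
    Submodule.subset_span (Set.mem_range_self i)
  have h1 : proj (v i) = ⟨v i, hvm⟩ := Submodule.linearProjOfIsCompl_apply_left hq ⟨v i, hvm⟩
  have h2 : hind.repr ⟨v i, hvm⟩ = Finsupp.single i 1 := hind.repr_eq_single i _ rfl
  simp only [LinearMap.comp_apply, h1, h2, Finsupp.lapply_apply, Finsupp.single_apply]

/-- Auxiliary nilpotent map used to build centralizing isometries. -/
def Nmap (φv : Fin m → ℝ) (s : Fin 2 → ℝ) : V14 m →ₗ[ℝ] V14 m where
  toFun x := ((x.2.1 ⬝ᵥ φv + (-(φv ⬝ᵥ φv)/2) * (s ⬝ᵥ x.2.2)) • s,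
    (-(s ⬝ᵥ x.2.2)) • φv, 0)
  map_add' a b := by
    simp only [Prod.snd_add, Prod.fst_add, add_dotProduct, dotProduct_add, Prod.mk_add_mk,
      Prod.mk.injEq]
    refine ⟨?_, ?_, by simp⟩ <;> module
  map_smul' r a := by
    simp only [Prod.smul_snd, Prod.smul_fst, smul_dotProduct, dotProduct_smul, smul_eq_mul,
      RingHom.id_apply, Prod.smul_mk, Prod.mk.injEq]
    refine ⟨?_, ?_, by simp⟩ <;> module

lemma Nmap_apply (φv : Fin m → ℝ) (s : Fin 2 → ℝ) (x : V14 m) :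
    Nmap φv s x = ((x.2.1 ⬝ᵥ φv + (-(φv ⬝ᵥ φv)/2) * (s ⬝ᵥ x.2.2)) • s,
      (-(s ⬝ᵥ x.2.2)) • φv, 0) := rfl

lemma Nmap_cube (φv : Fin m → ℝ) (s : Fin 2 → ℝ) (x : V14 m) :
    Nmap φv s (Nmap φv s (Nmap φv s x)) = 0 := by
  simp [Nmap_apply, smul_dotProduct, Prod.ext_iff]

/-- The linear equivalence `I + N`. -/
def Lmap (φv : Fin m → ℝ) (s : Fin 2 → ℝ) : V14 m ≃ₗ[ℝ] V14 m :=
  LinearEquiv.ofLinear (LinearMap.id + Nmap φv s)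
    (LinearMap.id - Nmap φv s + (Nmap φv s) ∘ₗ (Nmap φv s))
    (by
      apply LinearMap.ext; intro x
      simp only [LinearMap.comp_apply, LinearMap.add_apply, LinearMap.sub_apply,
        LinearMap.id_apply, map_sub, map_add, Nmap_cube]
      abel)
    (by
      apply LinearMap.ext; intro x
      simp only [LinearMap.comp_apply, LinearMap.add_apply, LinearMap.sub_apply,
        LinearMap.id_apply, map_sub, map_add, Nmap_cube]
      abel)

lemma Lmap_apply (φv : Fin m → ℝ) (s : Fin 2 → ℝ) (x : V14 m) :
    Lmap φv s x = x + Nmap φv s x := rfl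

/-- The centralizing affine isometry. -/
def zAff (φv : Fin m → ℝ) (s : Fin 2 → ℝ) (t : V14 m) : V14 m ≃ᵃ[ℝ] V14 m :=
  (Lmap φv s).toAffineEquiv.trans (AffineEquiv.constVAdd ℝ (V14 m) t)

lemma zAff_apply (φv : Fin m → ℝ) (s : Fin 2 → ℝ) (t x : V14 m) :
    zAff φv s t x = t + (x + Nmap φv s x) := rfl

lemma zAff_linear (φv : Fin m → ℝ) (s : Fin 2 → ℝ) (t x : V14 m) :
    (zAff φv s t).linear x = x + Nmap φv s x := by
  have : (zAff φv s t).linear (x - 0) = zAff φv s t x - zAff φv s t 0 :=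
    (zAff φv s t).toAffineMap.linearMap_vsub x 0
  rw [sub_zero] at this
  rw [this, zAff_apply, zAff_apply]
  simp [map_zero]

lemma zAff_mem_Iso (φv : Fin m → ℝ) (s : Fin 2 → ℝ) (t : V14 m) :
    zAff φv s t ∈ Iso14 m := by
  intro x y
  simp only [zAff_linear, Nmap_apply, form14, Prod.fst_add, Prod.snd_add, Prod.mk_add_mk]
  simp only [add_dotProduct, dotProduct_add, smul_dotProduct, dotProduct_smul, smul_eq_mul,
    add_zero, neg_mul, neg_neg]
  simp only [dotProduct_comm s x.2.2, dotProduct_comm s y.2.2, dotProduct_comm φv y.2.1,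
    dotProduct_comm φv x.2.1]
  ring

lemma zAff_comm (φv : Fin m → ℝ) (t : V14 m) (c : ℝ) (v : V14 m)
    (hc : v.2.1 ⬝ᵥ φv = c) (hv3 : v.2.2 = 0) :
    gamma14 c v * zAff φv (J *ᵥ t.2.2) t = zAff φv (J *ᵥ t.2.2) t * gamma14 c v := by
  apply AffineEquiv.ext
  intro x
  show gamma14 c v (zAff φv (J *ᵥ t.2.2) t x) = zAff φv (J *ᵥ t.2.2) t (gamma14 c v x)
  simp only [gamma14_apply, zAff_apply, Nmap_apply, hv3, Prod.fst_add, Prod.snd_add,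
    Prod.mk_add_mk, zero_add, add_zero, Prod.mk.injEq, Prod.ext_iff]
  constructor
  · simp only [Matrix.mulVec_add, smul_add, add_dotProduct, dotProduct_add, add_smul, hc]
    abel
  · constructor
    · abel
    · trivial

/-- the group generated by the `γᵢ` is a subgroup of the isometry
group of the form, has transitive centralizer there, and acts freely and
properly discontinuously on `ℝⁿ`. -/
theorem homogeneous_from_data (m : ℕ) (hm : 1 ≤ m) (k : ℕ)
    (c : Fin k → ℝ) (u : Fin k → Fin 2 → ℝ) (w : Fin k → Fin m → ℝ)
    (v : Fin k → V14 m) (hv : ∀ i, v i = (u i, w i, 0))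
    (hind : LinearIndependent ℝ v)
    (hlam : ∀ lam : Fin k → ℝ, ∑ i, lam i • w i = 0 → ∑ i, lam i * c i = 0) :
    Subgroup.closure (Set.range fun i => gamma14 (c i) (v i)) ≤ Iso14 m ∧
    (∀ p q : V14 m, ∃ z ∈ Iso14 m ⊓ Subgroup.centralizer
        ((Subgroup.closure (Set.range fun i => gamma14 (c i) (v i)) : Subgroup _) :
          Set (V14 m ≃ᵃ[ℝ] V14 m)), z p = q) ∧
    (∀ g ∈ Subgroup.closure (Set.range fun i => gamma14 (c i) (v i)),
      (∃ x : V14 m, g x = x) → g = 1) ∧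
    (∀ K : Set (V14 m), IsCompact K →
      {g : V14 m ≃ᵃ[ℝ] V14 m |
        g ∈ Subgroup.closure (Set.range fun i => gamma14 (c i) (v i)) ∧
        ((g '' K) ∩ K).Nonempty}.Finite) := by
  have hv3 : ∀ i, (v i).2.2 = 0 := fun i => by rw [hv i]
  have hw : ∀ i, (v i).2.1 = w i := fun i => by rw [hv i]
  obtain ⟨φ, hφ⟩ := exists_factor c w hlam
  set φv : Fin m → ℝ := fun j => φ (fun j' => if j = j' then 1 else 0) with hφv
  have hdot : ∀ a : Fin m → ℝ, a ⬝ᵥ φv = φ a := by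
    intro a
    rw [LinearMap.pi_apply_eq_sum_univ φ a]
    simp [dotProduct, hφv]
  refine ⟨?_, ?_, ?_, ?_⟩
  · -- closure ≤ Iso14
    rw [Subgroup.closure_le]
    rintro g ⟨i, rfl⟩
    exact gamma14_mem_Iso (c i) (v i)
  · -- transitivity of the centralizer
    intro p q
    set s : Fin 2 → ℝ := J *ᵥ (q.2.2 - p.2.2) with hs
    set t : V14 m := q - Lmap φv s p with ht
    have ht22 : t.2.2 = q.2.2 - p.2.2 := by
      rw [ht]
      show q.2.2 - (Lmap φv s p).2.2 = _
      rw [Lmap_apply]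
      show q.2.2 - (p.2.2 + (Nmap φv s p).2.2) = _
      rw [Nmap_apply]
      show q.2.2 - (p.2.2 + 0) = _
      rw [add_zero]
    have hst : J *ᵥ t.2.2 = s := by rw [ht22, hs]
    refine ⟨zAff φv s t, Subgroup.mem_inf.2 ⟨zAff_mem_Iso φv s t, ?_⟩, ?_⟩
    · rw [Subgroup.mem_centralizer_iff]
      intro h hh
      have : ∀ g ∈ Subgroup.closure (Set.range fun i => gamma14 (c i) (v i)),
          Commute (zAff φv s t) g := by
        intro g hg
        induction hg using Subgroup.closure_induction with
        | mem x hx =>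
          obtain ⟨i, rfl⟩ := hx
          have hcm := zAff_comm φv t (c i) (v i) (by rw [hw i, hdot, hφ]) (hv3 i)
          rw [hst] at hcm
          exact Commute.symm hcm
        | one => exact Commute.one_right _
        | mul a b _ _ iha ihb => exact Commute.mul_right iha ihb
        | inv a _ ih => exact Commute.inv_right ih
      exact (this h hh).symm
    · rw [zAff_apply, ht, Lmap_apply]
      abel
  · -- free action
    intro g hg hfix
    obtain ⟨n, rfl⟩ := mem_closure_rep c v hv3 hg
    obtain ⟨x, hx⟩ := hfix
    rw [gamma14_apply, Prod.ext_iff, Prod.ext_iff] at hx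
    obtain ⟨h1, h2, h3⟩ := hx
    have hV2 : (∑ i, (n i : ℝ) • v i).2.1 = 0 := by
      have := h2
      simp only at this
      linear_combination (norm := module) this
    have hV2' : ∑ i, (n i : ℝ) • w i = 0 := by
      rw [← hV2, Prod.snd_sum, Prod.fst_sum]
      congr 1; funext i
      show (n i : ℝ) • w i = ((n i : ℝ) • v i).2.1
      rw [hv i]; rfl
    have hC : ∑ i, (n i : ℝ) * c i = 0 := hlam _ hV2'
    have hV1 : (∑ i, (n i : ℝ) • v i).1 = 0 := by
      rw [hC] at h1
      simp only [zero_smul, add_zero] at h1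
      linear_combination (norm := module) h1
    have hV3 : (∑ i, (n i : ℝ) • v i).2.2 = 0 := sum_smul_v_snd_snd v hv3 _
    have hV : (∑ i, (n i : ℝ) • v i) = 0 := by
      rw [Prod.ext_iff, Prod.ext_iff]
      exact ⟨hV1, hV2, hV3⟩
    have hn : ∀ i, (n i : ℝ) = 0 := Fintype.linearIndependent_iff.1 hind _ hV
    have e1 : ∑ i, (n i : ℝ) * c i = 0 := hC
    have e2 : (∑ i, (n i : ℝ) • v i) = 0 := hV
    rw [e1, e2, gamma14_one]
  · -- proper discontinuity
    intro K hK
    obtain ⟨f, hf⟩ := exists_dual v hind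
    have hφc : Continuous φ := φ.continuous_of_finiteDimensional
    have hJ : Continuous fun a : Fin 2 → ℝ => J *ᵥ a :=
      (Matrix.mulVecLin J).continuous_of_finiteDimensional
    set G : V14 m × V14 m → V14 m := fun xy =>
      (xy.2.1 - xy.1.1 - φ (xy.2.2.1 - xy.1.2.1) • (J *ᵥ xy.1.2.2),
       xy.2.2.1 - xy.1.2.1, xy.2.2.2 - xy.1.2.2) with hG
    have hGc : Continuous G := by
      apply Continuous.prodMk
      · exact ((continuous_fst.comp continuous_snd).sub
          (continuous_fst.comp continuous_fst)).sub
          ((hφc.comp ((continuous_fst.comp (continuous_snd.comp continuous_snd)).sub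
            (continuous_fst.comp (continuous_snd.comp continuous_fst)))).smul
            (hJ.comp (continuous_snd.comp (continuous_snd.comp continuous_fst))))
      apply Continuous.prodMk
      · exact (continuous_fst.comp (continuous_snd.comp continuous_snd)).sub
          (continuous_fst.comp (continuous_snd.comp continuous_fst))
      · exact (continuous_snd.comp (continuous_snd.comp continuous_snd)).sub
          (continuous_snd.comp (continuous_snd.comp continuous_fst))
    have hKc : IsCompact (G '' (K ×ˢ K)) := (hK.prod hK).image hGc
    have hMj : ∀ j : Fin k, ∃ M : ℝ, ∀ y ∈ G '' (K ×ˢ K), |f j y| ≤ M := by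
      intro j
      obtain ⟨M, hM⟩ := hKc.exists_bound_of_continuousOn
        ((f j).continuous_of_finiteDimensional.continuousOn)
      exact ⟨M, fun y hy => by simpa [Real.norm_eq_abs] using hM y hy⟩
    choose M hM using hMj
    have hNfin : {n : Fin k → ℤ | ∀ j, |(n j : ℝ)| ≤ M j}.Finite := by
      apply Set.Finite.subset (Set.Finite.pi (fun j => Set.finite_Icc (-⌈M j⌉) ⌈M j⌉))
      intro n hn
      rw [Set.mem_pi]
      intro j _
      have h := hn j
      rw [abs_le] at h
      constructor
      · have : ((-⌈M j⌉ : ℤ) : ℝ) ≤ (n j : ℝ) := le_trans (by push_cast; linarith [Int.le_ceil (M j)]) h.1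
        exact_mod_cast this
      · have : ((n j : ℝ)) ≤ ((⌈M j⌉ : ℤ) : ℝ) := le_trans h.2 (Int.le_ceil (M j))
        exact_mod_cast this
    apply Set.Finite.subset (Set.Finite.image
      (fun n : Fin k → ℤ => gamma14 (∑ i, (n i : ℝ) * c i) (∑ i, (n i : ℝ) • v i)) hNfin)
    rintro g ⟨hg, y0, ⟨⟨x, hxK, hgx⟩, hy0K⟩⟩
    obtain ⟨n, rfl⟩ := mem_closure_rep c v hv3 hg
    refine ⟨n, ?_, rfl⟩
    set C := ∑ i, (n i : ℝ) * c i with hCdef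
    set V := ∑ i, (n i : ℝ) • v i with hVdef
    have hV2w : V.2.1 = ∑ i, (n i : ℝ) • w i := by
      rw [hVdef, Prod.snd_sum, Prod.fst_sum]
      congr 1; funext i
      show ((n i : ℝ) • v i).2.1 = (n i : ℝ) • w i
      rw [hv i]; rfl
    have hφV2 : φ V.2.1 = C := by
      rw [hV2w, map_sum, hCdef]
      congr 1; funext i
      rw [LinearMap.map_smul, hφ, smul_eq_mul]
    have hVG : V = G (x, gamma14 C V x) := by
      rw [hG]
      simp only [gamma14_apply]
      have e2 : (V.2.1 + x.2.1) - x.2.1 = V.2.1 := by abel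
      rw [Prod.ext_iff, Prod.ext_iff]
      refine ⟨?_, ?_, ?_⟩
      · show V.1 = V.1 + (x.1 + C • (J *ᵥ x.2.2)) - x.1 - φ ((V.2.1 + x.2.1) - x.2.1) • (J *ᵥ x.2.2)
        rw [e2, hφV2]
        abel
      · show V.2.1 = (V.2.1 + x.2.1) - x.2.1
        abel
      · show V.2.2 = (V.2.2 + x.2.2) - x.2.2
        abel
    have hVmem : V ∈ G '' (K ×ˢ K) := by
      refine ⟨(x, gamma14 C V x), ?_, hVG.symm⟩
      rw [Set.mem_prod]
      exact ⟨hxK, by rw [← hgx] at hy0K; exact hy0K⟩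
    intro j
    have hfV : f j V = (n j : ℝ) := by
      rw [hVdef, map_sum]
      rw [Finset.sum_eq_single j]
      · rw [LinearMap.map_smul, hf j j, if_pos rfl, smul_eq_mul, mul_one]
      · intro i _ hij
        rw [LinearMap.map_smul, hf j i, if_neg hij, smul_eq_mul, mul_zero]
      · intro h; exact absurd (Finset.mem_univ j) h
    rw [← hfV]
    exact hM j V hVmem

end
end
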